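/- arXiv:1911.09700 — 2 statements merged into one kernel-verified Lean document; each statement's English description precedes it below -/
import Mathlib

section
/- Let A and B be n×n matrices over the nonnegative reals with λ > 0 and μ > 0, and suppose H(μ) > λ. Let V = {(f_A(x), f_B(x)) : x a positive vector}. Then the set of Pareto-minimal points of V equals the segment {(α, G(α)) : λ ≤ α ≤ H(μ)}, where a point p ∈ V is Pareto-minimal if there is no q ∈ V with q₁ ≤ p₁, q₂ ≤ p₂ and q ≠ p; moreover, for each such α, every positive vector of the form x = (α^{-1}A ⊕ G(α)^{-1}B)* ⊗ u with u positive attains the value (f_A(x), f_B(x)) ≤ (α, G(α)). -/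
open scoped NNReal

/-- Square matrices over the max-times semifield of nonnegative reals. -/
abbrev TMat (n : ℕ) := Matrix (Fin n) (Fin n) ℝ≥0

/-- Tropical (max-times) matrix product. -/
noncomputable def tmul {n : ℕ} (A B : TMat n) : TMat n :=
  fun i j => Finset.univ.sup fun k => A i k * B k j

/-- Tropical (max-times) matrix-vector product. -/
noncomputable def tmulVec {n : ℕ} (A : TMat n) (x : Fin n → ℝ≥0) : Fin n → ℝ≥0 :=
  fun i => Finset.univ.sup fun j => A i j * x j

/-- Tropical identity matrix. -/
noncomputable def tId (n : ℕ) : TMat n := fun i j => if i = j then 1 else 0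

/-- Tropical matrix powers. -/
noncomputable def tpow {n : ℕ} (A : TMat n) : ℕ → TMat n
  | 0 => tId n
  | k + 1 => tmul A (tpow A k)

/-- Tropical (entrywise max) matrix addition. -/
noncomputable def tadd {n : ℕ} (A B : TMat n) : TMat n := fun i j => A i j ⊔ B i j

/-- Entrywise scalar multiplication. -/
noncomputable def tsmul {n : ℕ} (a : ℝ≥0) (A : TMat n) : TMat n := fun i j => a * A i j

/-- Tropical trace: tr A = max_i a_{ii}. -/
noncomputable def ttr {n : ℕ} (A : TMat n) : ℝ≥0 := Finset.univ.sup fun i => A i i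

/-- Tropical "determinant": Tr(A) = max_{k=1..n} tr(A^k). -/
noncomputable def tTr {n : ℕ} (A : TMat n) : ℝ≥0 :=
  (Finset.Icc 1 n).sup fun k => ttr (tpow A k)

/-- Kleene star: entrywise max of A^0, ..., A^{n-1}. -/
noncomputable def tstar {n : ℕ} (A : TMat n) : TMat n :=
  fun i j => (Finset.range n).sup fun k => tpow A k i j

/-- Tropical product of a finite chain of matrices F 0 ⊗ F 1 ⊗ ⋯ ⊗ F (k-1). -/
noncomputable def tchain {n : ℕ} : (k : ℕ) → (Fin k → TMat n) → TMat n
  | 0, _ => tId n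
  | k + 1, F => tmul (F 0) (tchain k fun t => F t.succ)

/-- Tuples of k nonnegative integers with sum m. -/
def tuples (k m : ℕ) : Finset (Fin k → Fin (m + 1)) :=
  Finset.univ.filter fun f => (∑ t, (f t : ℕ)) = m

/-- Tuples of k integers from {0,1} with sum l. -/
def binTuples (k l : ℕ) : Finset (Fin k → Fin 2) :=
  Finset.univ.filter fun j => (∑ t, (j t : ℕ)) = l

/-- The objective f_M(x) = max_{i,j} m_{ij} x_j / x_i. -/
noncomputable def fobj {n : ℕ} (M : TMat n) (x : Fin n → ℝ≥0) : ℝ≥0 :=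
  Finset.univ.sup fun p : Fin n × Fin n => M p.1 p.2 * x p.2 / x p.1

/-- Spectral radius: λ = max_{k=1..n} (tr(A^k))^{1/k}. -/
noncomputable def specRad {n : ℕ} (A : TMat n) : ℝ≥0 :=
  (Finset.Icc 1 n).sup fun k => ttr (tpow A k) ^ ((1 : ℝ) / k)

/-- σ = max over k=1..n-1, m=1..n-k and tuples (i_1,…,i_k) with sum m of
    (tr(A^{i_1} C ⋯ A^{i_k} C))^{1/m}. -/
noncomputable def sigmaC {n : ℕ} (A C : TMat n) : ℝ≥0 :=
  (Finset.Icc 1 (n - 1)).sup fun k =>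
    (Finset.Icc 1 (n - k)).sup fun m =>
      (tuples k m).sup fun f =>
        ttr (tchain k fun t => tmul (tpow A (f t : ℕ)) C) ^ ((1 : ℝ) / m)

/-- r_{k,l,m} = max over tuples (i_1,…,i_k) with sum m and (j_1,…,j_k) ∈ {0,1}^k with
    sum l of tr(A^{i_1} B^{j_1} C^{1-j_1} ⋯ A^{i_k} B^{j_k} C^{1-j_k}). -/
noncomputable def rklm {n : ℕ} (A B C : TMat n) (k l m : ℕ) : ℝ≥0 :=
  (tuples k m).sup fun f =>
    (binTuples k l).sup fun j =>
      ttr (tchain k fun t =>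
        tmul (tpow A (f t : ℕ)) (tmul (tpow B (j t : ℕ)) (tpow C (1 - (j t : ℕ)))))

/-- G(s) = max_{k,m,l} r_{k,l,m}^{1/l} s^{-m/l}. -/
noncomputable def Gfun {n : ℕ} (A B C : TMat n) (s : ℝ≥0) : ℝ≥0 :=
  (Finset.Icc 1 (n - 1)).sup fun k =>
    (Finset.Icc 1 (n - k)).sup fun m =>
      (Finset.Icc 1 k).sup fun l =>
        rklm A B C k l m ^ ((1 : ℝ) / l) * s ^ (-(m : ℝ) / l)

/-- H(t) = max_{k,m,l} r_{k,l,m}^{1/m} t^{-l/m}. -/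
noncomputable def Hfun {n : ℕ} (A B C : TMat n) (t : ℝ≥0) : ℝ≥0 :=
  (Finset.Icc 1 (n - 1)).sup fun k =>
    (Finset.Icc 1 (n - k)).sup fun m =>
      (Finset.Icc 1 k).sup fun l =>
        rklm A B C k l m ^ ((1 : ℝ) / m) * t ^ (-(l : ℝ) / m)

/-- Unconstrained r_{k,m} = max over tuples (i_1,…,i_k) with sum m of
    tr(A^{i_1} B ⋯ A^{i_k} B). -/
noncomputable def rkm {n : ℕ} (A B : TMat n) (k m : ℕ) : ℝ≥0 :=
  (tuples k m).sup fun f => ttr (tchain k fun t => tmul (tpow A (f t : ℕ)) B)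

/-- Unconstrained G(s) = max_{k,m} r_{k,m}^{1/k} s^{-m/k}. -/
noncomputable def Gfun0 {n : ℕ} (A B : TMat n) (s : ℝ≥0) : ℝ≥0 :=
  (Finset.Icc 1 (n - 1)).sup fun k =>
    (Finset.Icc 1 (n - k)).sup fun m =>
      rkm A B k m ^ ((1 : ℝ) / k) * s ^ (-(m : ℝ) / k)

/-- Unconstrained H(t) = max_{k,m} r_{k,m}^{1/m} t^{-k/m}. -/
noncomputable def Hfun0 {n : ℕ} (A B : TMat n) (t : ℝ≥0) : ℝ≥0 :=
  (Finset.Icc 1 (n - 1)).sup fun k =>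
    (Finset.Icc 1 (n - k)).sup fun m =>
      rkm A B k m ^ ((1 : ℝ) / m) * t ^ (-(k : ℝ) / m)

/-- Pareto-minimal points of a set V ⊆ ℝ≥0 × ℝ≥0. -/
def ParetoMin (V : Set (ℝ≥0 × ℝ≥0)) (p : ℝ≥0 × ℝ≥0) : Prop :=
  p ∈ V ∧ ¬∃ q ∈ V, q.1 ≤ p.1 ∧ q.2 ≤ p.2 ∧ q ≠ p

/-- The set of objective values over positive vectors of the unconstrained problem. -/
def V0 {n : ℕ} (A B : TMat n) : Set (ℝ≥0 × ℝ≥0) :=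
  {p | ∃ x : Fin n → ℝ≥0, (∀ i, 0 < x i) ∧ p = (fobj A x, fobj B x)}

section Basic
variable {n : ℕ}

lemma tmul_le_iff {A B : TMat n} {i j : Fin n} {c : ℝ≥0} :
    tmul A B i j ≤ c ↔ ∀ k, A i k * B k j ≤ c := by
  simp [tmul, Finset.sup_le_iff]

lemma le_tmul (A B : TMat n) (i k j : Fin n) : A i k * B k j ≤ tmul A B i j :=
  Finset.le_sup (f := fun k => A i k * B k j) (Finset.mem_univ k)

lemma tmul_assoc (A B C : TMat n) : tmul (tmul A B) C = tmul A (tmul B C) := by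
  funext i j
  show (Finset.univ.sup fun k => (Finset.univ.sup fun p => A i p * B p k) * C k j)
      = Finset.univ.sup fun p => A i p * Finset.univ.sup fun k => B p k * C k j
  calc (Finset.univ.sup fun k => (Finset.univ.sup fun p => A i p * B p k) * C k j)
      = Finset.univ.sup fun k => Finset.univ.sup fun p => A i p * B p k * C k j := by
        simp only [NNReal.finset_sup_mul]
    _ = Finset.univ.sup fun p => Finset.univ.sup fun k => A i p * (B p k * C k j) := by
        rw [Finset.sup_comm]; simp only [mul_assoc]
    _ = Finset.univ.sup fun p => A i p * Finset.univ.sup fun k => B p k * C k j := by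
        simp only [NNReal.mul_finset_sup]

lemma tmul_tId (A : TMat n) : tmul A (tId n) = A := by
  funext i j
  apply le_antisymm
  · rw [tmul_le_iff]
    intro k
    by_cases h : k = j <;> simp [tId, h]
  · simpa [tId] using le_tmul A (tId n) i j j

lemma tId_tmul (A : TMat n) : tmul (tId n) A = A := by
  funext i j
  apply le_antisymm
  · rw [tmul_le_iff]
    intro k
    by_cases h : i = k <;> simp [tId, h]
  · simpa [tId] using le_tmul (tId n) A i i j

lemma ttr_tmul_comm (A B : TMat n) : ttr (tmul A B) = ttr (tmul B A) := by
  show (Finset.univ.sup fun i => Finset.univ.sup fun k => A i k * B k i)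
      = Finset.univ.sup fun k => Finset.univ.sup fun i => B k i * A i k
  rw [Finset.sup_comm]
  simp only [mul_comm]

lemma le_ttr (A : TMat n) (i : Fin n) : A i i ≤ ttr A :=
  Finset.le_sup (f := fun i => A i i) (Finset.mem_univ i)

lemma ttr_le_iff {A : TMat n} {c : ℝ≥0} : ttr A ≤ c ↔ ∀ i, A i i ≤ c := by
  simp [ttr, Finset.sup_le_iff]

lemma tmul_mono {A B A' B' : TMat n} (hA : ∀ i j, A i j ≤ A' i j) (hB : ∀ i j, B i j ≤ B' i j) :
    ∀ i j, tmul A B i j ≤ tmul A' B' i j := by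
  intro i j
  rw [tmul_le_iff]
  intro k
  exact le_trans (mul_le_mul' (hA i k) (hB k j)) (le_tmul A' B' i k j)

lemma tsmul_tmul (c : ℝ≥0) (A B : TMat n) : tmul (tsmul c A) B = tsmul c (tmul A B) := by
  funext i j
  show (Finset.univ.sup fun k => c * A i k * B k j) = c * Finset.univ.sup fun k => A i k * B k j
  rw [NNReal.mul_finset_sup]
  simp only [mul_assoc]

lemma tmul_tsmul (c : ℝ≥0) (A B : TMat n) : tmul A (tsmul c B) = tsmul c (tmul A B) := by
  funext i j
  show (Finset.univ.sup fun k => A i k * (c * B k j)) = c * Finset.univ.sup fun k => A i k * B k j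
  rw [NNReal.mul_finset_sup]
  congr 1; funext k; ring

lemma ttr_tsmul (c : ℝ≥0) (A : TMat n) : ttr (tsmul c A) = c * ttr A := by
  show (Finset.univ.sup fun i => c * A i i) = c * Finset.univ.sup fun i => A i i
  rw [NNReal.mul_finset_sup]

lemma tsmul_tsmul (c d : ℝ≥0) (A : TMat n) : tsmul c (tsmul d A) = tsmul (c*d) A := by
  funext i j; show c * (d * A i j) = c * d * A i j; ring

end Basic

section Chains
variable {n : ℕ}

/-- Chain product of a list of matrices. -/
noncomputable def lchain : List (TMat n) → TMat n
  | [] => tId n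
  | M :: L => tmul M (lchain L)

@[simp] lemma lchain_nil : lchain ([] : List (TMat n)) = tId n := rfl
@[simp] lemma lchain_cons (M : TMat n) (L : List (TMat n)) :
    lchain (M :: L) = tmul M (lchain L) := rfl

lemma lchain_append (L₁ L₂ : List (TMat n)) :
    lchain (L₁ ++ L₂) = tmul (lchain L₁) (lchain L₂) := by
  induction L₁ with
  | nil => simp [tId_tmul]
  | cons M L ih => simp [ih, tmul_assoc]

lemma tchain_eq_lchain (k : ℕ) (F : Fin k → TMat n) : tchain k F = lchain (List.ofFn F) := by
  induction k with
  | zero => simp [tchain]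
  | succ k ih => rw [List.ofFn_succ]; simp [tchain, ih]

lemma tpow_eq_lchain (A : TMat n) (k : ℕ) : tpow A k = lchain (List.replicate k A) := by
  induction k with
  | zero => rfl
  | succ k ih => simp [tpow, List.replicate_succ, ih]

lemma ttr_lchain_rotate (L₁ L₂ : List (TMat n)) :
    ttr (lchain (L₁ ++ L₂)) = ttr (lchain (L₂ ++ L₁)) := by
  rw [lchain_append, lchain_append, ttr_tmul_comm]

/-- Word matrix: `false` ↦ P, `true` ↦ Q. -/
noncomputable def wmat (P Q : TMat n) (w : List Bool) : TMat n :=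
  lchain (w.map fun b => bif b then Q else P)

@[simp] lemma wmat_nil (P Q : TMat n) : wmat P Q [] = tId n := rfl
@[simp] lemma wmat_cons_true (P Q : TMat n) (w : List Bool) :
    wmat P Q (true :: w) = tmul Q (wmat P Q w) := rfl
@[simp] lemma wmat_cons_false (P Q : TMat n) (w : List Bool) :
    wmat P Q (false :: w) = tmul P (wmat P Q w) := rfl

lemma wmat_append (P Q : TMat n) (w₁ w₂ : List Bool) :
    wmat P Q (w₁ ++ w₂) = tmul (wmat P Q w₁) (wmat P Q w₂) := by
  simp [wmat, lchain_append]

/-- Scaling a word matrix. -/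
lemma wmat_tsmul (P Q : TMat n) (a b : ℝ≥0) (w : List Bool) :
    wmat (tsmul a P) (tsmul b Q) w
      = tsmul (a ^ (w.count false) * b ^ (w.count true)) (wmat P Q w) := by
  induction w with
  | nil =>
    simp [tsmul]
    funext i j; simp [tsmul]
  | cons c w ih =>
    cases c <;>
      simp [ih, tsmul_tmul, tmul_tsmul, tsmul_tsmul, List.count_cons, pow_succ] <;>
      (congr 1; ring)

lemma count_true_add_count_false (w : List Bool) : w.count true + w.count false = w.length := by
  induction w with
  | nil => simp
  | cons b t ih => cases b <;> simp [List.count_cons] <;> omega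

/-- Word expansion: every entry of a power of a tropical sum is dominated by some word. -/
lemma exists_word (hn : 0 < n) (P Q : TMat n) (k : ℕ) (i j : Fin n) :
    ∃ w : List Bool, w.length = k ∧ tpow (tadd P Q) k i j ≤ wmat P Q w i j := by
  induction k generalizing i j with
  | zero => exact ⟨[], rfl, le_rfl⟩
  | succ k ih =>
    have hne : (Finset.univ : Finset (Fin n)).Nonempty := ⟨⟨0, hn⟩, Finset.mem_univ _⟩
    obtain ⟨p, -, hp⟩ := Finset.exists_mem_eq_sup Finset.univ hne
      fun p => tadd P Q i p * tpow (tadd P Q) k p j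
    obtain ⟨w, hw, hle⟩ := ih p j
    have hstep : tpow (tadd P Q) (k+1) i j = tadd P Q i p * tpow (tadd P Q) k p j := hp
    rcases le_total (P i p) (Q i p) with hc | hc
    · refine ⟨true :: w, by simp [hw], ?_⟩
      rw [hstep]
      have h1 : tadd P Q i p = Q i p := sup_eq_right.mpr hc
      calc tadd P Q i p * tpow (tadd P Q) k p j ≤ Q i p * wmat P Q w p j := by
            rw [h1]; exact mul_le_mul_right hle _
        _ ≤ wmat P Q (true :: w) i j := by
            simpa using le_tmul Q (wmat P Q w) i p j
    · refine ⟨false :: w, by simp [hw], ?_⟩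
      rw [hstep]
      have h1 : tadd P Q i p = P i p := sup_eq_left.mpr hc
      calc tadd P Q i p * tpow (tadd P Q) k p j ≤ P i p * wmat P Q w p j := by
            rw [h1]; exact mul_le_mul_right hle _
        _ ≤ wmat P Q (false :: w) i j := by
            simpa using le_tmul P (wmat P Q w) i p j

end Chains

section Parse
variable {n : ℕ} (A B : TMat n)

/-- Block A^i ⬝ B. -/
noncomputable def blk (i : ℕ) : TMat n := tmul (tpow A i) B

lemma blk_zero : blk A B 0 = B := by
  show tmul (tId n) B = B
  exact tId_tmul B

lemma blk_succ (h : ℕ) : tmul A (blk A B h) = blk A B (h+1) := by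
  show tmul A (tmul (tpow A h) B) = tmul (tmul A (tpow A h)) B
  rw [tmul_assoc]

lemma parse_word (y : List Bool) :
    ∃ g : List ℕ, g.length = (y ++ [true]).count true ∧ g.sum = (y ++ [true]).count false ∧
      wmat A B (y ++ [true]) = lchain (g.map (blk A B)) := by
  induction y with
  | nil =>
    refine ⟨[0], by simp, by simp, ?_⟩
    show tmul B (tId n) = tmul (blk A B 0) (tId n)
    rw [blk_zero]
  | cons b y ih =>
    obtain ⟨g, hlen, hsum, heq⟩ := ih
    cases b with
    | true =>
      refine ⟨0 :: g, by simp [List.count_cons] at hlen ⊢; omega,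
        by simp [List.count_cons] at hsum ⊢; omega, ?_⟩
      show tmul B (wmat A B (y ++ [true])) = tmul (blk A B 0) (lchain (g.map (blk A B)))
      rw [heq, blk_zero]
    | false =>
      have hg : g ≠ [] := by
        intro h
        rw [h] at hlen
        simp [List.count_cons] at hlen
      obtain ⟨h, t, rfl⟩ := List.exists_cons_of_ne_nil hg
      refine ⟨(h+1) :: t, by simp [List.count_cons] at hlen ⊢; omega,
        by simp [List.count_cons] at hsum ⊢; omega, ?_⟩
      show tmul A (wmat A B (y ++ [true])) = tmul (blk A B (h+1)) (lchain (t.map (blk A B)))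
      rw [heq]
      show tmul A (tmul (blk A B h) (lchain (t.map (blk A B)))) = _
      rw [← tmul_assoc, blk_succ]

end Parse

section RkmBound
variable {n : ℕ} (A B : TMat n)

lemma ttr_blocks_le_rkm (g : List ℕ) :
    ttr (lchain (g.map (blk A B))) ≤ rkm A B g.length g.sum := by
  have hlt : ∀ t : Fin g.length, g.get t < g.sum + 1 := by
    intro t
    have : g.get t ∈ g := by
      have := List.get_mem g t
      simpa using this
    exact Nat.lt_succ_of_le (List.single_le_sum (fun _ _ => Nat.zero_le _) _ this)
  set f : Fin g.length → Fin (g.sum + 1) := fun t => ⟨g.get t, hlt t⟩ with hf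
  have hmem : f ∈ tuples g.length g.sum := by
    simp only [tuples, Finset.mem_filter, Finset.mem_univ, true_and, hf]
    have := List.sum_ofFn (f := fun t : Fin g.length => g.get t)
    rw [List.ofFn_get] at this
    simpa using this.symm
  have hchain : (tchain g.length fun t => tmul (tpow A ((f t : Fin (g.sum+1)) : ℕ)) B)
      = lchain (g.map (blk A B)) := by
    rw [tchain_eq_lchain]
    congr 1
    have h1 : (fun t : Fin g.length => tmul (tpow A ((f t : Fin (g.sum+1)) : ℕ)) B)
        = (blk A B) ∘ g.get := by
      funext t; rfl
    rw [h1, ← List.map_ofFn, List.ofFn_get]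
  calc ttr (lchain (g.map (blk A B)))
      = ttr (tchain g.length fun t => tmul (tpow A ((f t : Fin (g.sum+1)) : ℕ)) B) := by
        rw [hchain]
    _ ≤ rkm A B g.length g.sum :=
        Finset.le_sup (f := fun f : Fin g.length → Fin (g.sum+1) =>
          ttr (tchain g.length fun t => tmul (tpow A ((f t : Fin (g.sum+1)) : ℕ)) B)) hmem

/-- Any word with at least one `true` has trace bounded by the corresponding `rkm`. -/
lemma ttr_word_le_rkm (w : List Bool) (hw : true ∈ w) :
    ttr (wmat A B w) ≤ rkm A B (w.count true) (w.count false) := by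
  obtain ⟨u, v, rfl⟩ := List.append_of_mem hw
  have hrot : ttr (wmat A B (u ++ true :: v)) = ttr (wmat A B ((v ++ u) ++ [true])) := by
    have h1 : u ++ true :: v = (u ++ [true]) ++ v := by simp
    rw [h1]
    show ttr (lchain _) = ttr (lchain _)
    rw [List.map_append, List.map_append, ttr_lchain_rotate, ← List.map_append,
      ← List.map_append]
    congr 2
    simp
  rw [hrot]
  obtain ⟨g, hlen, hsum, heq⟩ := parse_word A B (v ++ u)
  rw [show wmat A B ((v ++ u) ++ [true]) = lchain (g.map (blk A B)) from heq]
  have hcnt1 : ((v ++ u) ++ [true]).count true = (u ++ true :: v).count true := by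
    simp [List.count_append, List.count_cons]; omega
  have hcnt2 : ((v ++ u) ++ [true]).count false = (u ++ true :: v).count false := by
    simp [List.count_append, List.count_cons]; omega
  rw [← hcnt1, ← hcnt2, ← hlen, ← hsum]
  exact ttr_blocks_le_rkm A B g

end RkmBound

section Paths
variable {n : ℕ} (D : TMat n)

/-- Weight of a specific path is at most the corresponding power entry. -/
lemma path_le_tpow (N : ℕ) (v : ℕ → Fin n) :
    (∏ t ∈ Finset.range N, D (v t) (v (t+1))) ≤ tpow D N (v 0) (v N) := by
  induction N generalizing v with
  | zero => simp [tpow, tId]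
  | succ N ih =>
    rw [Finset.prod_range_succ' (fun t => D (v t) (v (t+1))) N]
    have h1 : (∏ t ∈ Finset.range N, D (v (t+1)) (v (t+1+1))) ≤ tpow D N (v 1) (v (N+1)) := by
      have := ih (fun t => v (t+1))
      simpa using this
    calc (∏ t ∈ Finset.range N, D (v (t+1)) (v (t+1+1))) * D (v 0) (v 1)
        ≤ tpow D N (v 1) (v (N+1)) * D (v 0) (v 1) := mul_le_mul_left h1 _
      _ = D (v 0) (v 1) * tpow D N (v 1) (v (N+1)) := mul_comm _ _
      _ ≤ tpow D (N+1) (v 0) (v (N+1)) := le_tmul D (tpow D N) (v 0) (v 1) (v (N+1))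

/-- Every nonzero entry of a power is attained (up to ≤) by some path. -/
lemma exists_path (hn : 0 < n) (N : ℕ) (i j : Fin n) (h : tpow D N i j ≠ 0) :
    ∃ v : ℕ → Fin n, v 0 = i ∧ v N = j ∧
      tpow D N i j ≤ ∏ t ∈ Finset.range N, D (v t) (v (t+1)) := by
  induction N generalizing i j with
  | zero =>
    have hij : i = j := by
      by_contra hne
      simp [tpow, tId, hne] at h
    exact ⟨fun _ => i, rfl, hij ▸ rfl, by simp [tpow, tId, hij]⟩
  | succ N ih =>
    have hne : (Finset.univ : Finset (Fin n)).Nonempty := ⟨⟨0, hn⟩, Finset.mem_univ _⟩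
    obtain ⟨q, -, hq⟩ := Finset.exists_mem_eq_sup Finset.univ hne
      fun q => D i q * tpow D N q j
    have hstep : tpow D (N+1) i j = D i q * tpow D N q j := hq
    have hnz : tpow D N q j ≠ 0 := by
      intro h0
      rw [hstep, h0, mul_zero] at h
      exact h rfl
    obtain ⟨v', hv0, hvN, hle⟩ := ih q j hnz
    refine ⟨fun t => match t with | 0 => i | (s+1) => v' s, rfl, hvN, ?_⟩
    rw [hstep, Finset.prod_range_succ']
    simp only
    calc D i q * tpow D N q j ≤ D i q * ∏ t ∈ Finset.range N, D (v' t) (v' (t+1)) :=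
          mul_le_mul_right hle _
      _ = (∏ t ∈ Finset.range N, D (v' t) (v' (t+1))) * D i (v' 0) := by
          rw [hv0, mul_comm]
      _ = _ := rfl

lemma le_tstar (k : ℕ) (hk : k < n) (i j : Fin n) : tpow D k i j ≤ tstar D i j :=
  Finset.le_sup (f := fun k => tpow D k i j) (Finset.mem_range.mpr hk)

/-- Cycle removal: under the trace condition, every path weight is ≤ the star entry. -/
lemma path_le_tstar (hn : 0 < n) (hD : ∀ c ∈ Finset.Icc 1 n, ttr (tpow D c) ≤ 1) :
    ∀ N : ℕ, ∀ v : ℕ → Fin n,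
      (∏ t ∈ Finset.range N, D (v t) (v (t+1))) ≤ tstar D (v 0) (v N) := by
  intro N
  induction N using Nat.strong_induction_on with
  | _ N ih =>
    intro v
    by_cases hN : N < n
    · exact le_trans (path_le_tpow D N v) (le_tstar D N hN (v 0) (v N))
    · push_neg at hN
      -- pigeonhole on v restricted to {0, ..., n}
      obtain ⟨a', b', hab', heq'⟩ := Fintype.exists_ne_map_eq_of_card_lt
        (fun t : Fin (n+1) => v t) (by simp)
      -- wlog a < b
      obtain ⟨a, b, hab, hle_n, heq⟩ : ∃ a b : ℕ, a < b ∧ b ≤ n ∧ v a = v b := by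
        rcases lt_or_gt_of_ne hab' with h | h
        · exact ⟨a', b', h, Nat.lt_succ_iff.mp b'.2, heq'⟩
        · exact ⟨b', a', h, Nat.lt_succ_iff.mp a'.2, heq'.symm⟩
      set c := b - a with hc
      have hc1 : 1 ≤ c := by omega
      have hcN : c ≤ N := by omega
      have haN : a ≤ N - c := by omega
      -- middle cycle has weight ≤ 1
      have hmid : (∏ t ∈ Finset.Ico a b, D (v t) (v (t+1))) ≤ 1 := by
        rw [Finset.prod_Ico_eq_prod_range]
        have h1 : (∏ t ∈ Finset.range (b-a), D (v (a+t)) (v (a+t+1)))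
            ≤ tpow D (b-a) (v a) (v (a + (b-a))) := by
          have := path_le_tpow D (b-a) (fun t => v (a+t))
          simpa [add_assoc] using this
        have h2 : a + (b-a) = b := by omega
        rw [h2] at h1
        calc (∏ t ∈ Finset.range (b-a), D (v (a+t)) (v (a+t+1)))
            ≤ tpow D (b-a) (v a) (v b) := h1
          _ = tpow D (b-a) (v a) (v a) := by rw [← heq]
          _ ≤ ttr (tpow D (b-a)) := le_ttr _ _
          _ ≤ 1 := hD (b-a) (Finset.mem_Icc.mpr ⟨by omega, by omega⟩)
      -- shortcut path
      set v' : ℕ → Fin n := fun t => if t < a then v t else v (t + c) with hv'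
      have hsplit : (∏ t ∈ Finset.range N, D (v t) (v (t+1)))
          = ((∏ t ∈ Finset.range a, D (v t) (v (t+1)))
            * ∏ t ∈ Finset.Ico a b, D (v t) (v (t+1)))
            * ∏ t ∈ Finset.Ico b N, D (v t) (v (t+1)) := by
        rw [Finset.range_eq_Ico,
          ← Finset.prod_Ico_consecutive _ (by omega : 0 ≤ b) (by omega : b ≤ N),
          ← Finset.prod_Ico_consecutive _ (by omega : 0 ≤ a) (by omega : a ≤ b), Finset.range_eq_Ico]
      -- identify the two outer products with the shortcut path products
      have hX : (∏ t ∈ Finset.range a, D (v t) (v (t+1)))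
          = ∏ t ∈ Finset.range a, D (v' t) (v' (t+1)) := by
        apply Finset.prod_congr rfl
        intro t ht
        rw [Finset.mem_range] at ht
        have h1 : v' t = v t := by simp [hv', ht]
        have h2 : v' (t+1) = v (t+1) := by
          by_cases h : t + 1 < a
          · simp [hv', h]
          · have ha : t + 1 = a := by omega
            have : v' (t+1) = v (t+1+c) := by simp [hv', ha]
            rw [this, ha]
            have hb : a + c = b := by omega
            rw [hb, ← heq]
        rw [h1, h2]
      have hZ : (∏ t ∈ Finset.Ico b N, D (v t) (v (t+1)))
          = ∏ t ∈ Finset.Ico a (N - c), D (v' t) (v' (t+1)) := by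
        rw [Finset.prod_Ico_eq_prod_range, Finset.prod_Ico_eq_prod_range]
        have hNc : N - c - a = N - b := by omega
        rw [hNc]
        apply Finset.prod_congr rfl
        intro t ht
        have h1 : v' (a + t) = v (b + t) := by
          have : ¬ (a + t < a) := by omega
          simp only [hv', this, if_false]
          congr 1
          omega
        have h2 : v' (a + t + 1) = v (b + t + 1) := by
          have : ¬ (a + t + 1 < a) := by omega
          simp only [hv', this, if_false]
          congr 1
          omega
        rw [h1, h2]
      have hmerge : (∏ t ∈ Finset.range a, D (v' t) (v' (t+1)))
          * ∏ t ∈ Finset.Ico a (N - c), D (v' t) (v' (t+1))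
          = ∏ t ∈ Finset.range (N - c), D (v' t) (v' (t+1)) := by
        rw [Finset.range_eq_Ico, Finset.range_eq_Ico]
        exact Finset.prod_Ico_consecutive (fun t => D (v' t) (v' (t+1))) (by omega : 0 ≤ a) (by omega : a ≤ N - c)
      have hend : tstar D (v' 0) (v' (N - c)) = tstar D (v 0) (v N) := by
        have h0 : v' 0 = v 0 := by
          by_cases h : 0 < a
          · simp [hv', h]
          · have ha : a = 0 := by omega
            have : v' 0 = v c := by simp [hv', ha]
            rw [this]
            have : c = b := by omega
            rw [this, ← heq, ha]
        have hNe : v' (N - c) = v N := by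
          have : ¬ (N - c < a) := by omega
          simp only [hv', this, if_false]
          congr 1
          omega
        rw [h0, hNe]
      calc (∏ t ∈ Finset.range N, D (v t) (v (t+1)))
          = ((∏ t ∈ Finset.range a, D (v t) (v (t+1)))
            * ∏ t ∈ Finset.Ico a b, D (v t) (v (t+1)))
            * ∏ t ∈ Finset.Ico b N, D (v t) (v (t+1)) := hsplit
        _ ≤ ((∏ t ∈ Finset.range a, D (v t) (v (t+1))) * 1)
            * ∏ t ∈ Finset.Ico b N, D (v t) (v (t+1)) :=
            mul_le_mul_left (mul_le_mul_right hmid _) _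
        _ = (∏ t ∈ Finset.range a, D (v' t) (v' (t+1)))
            * ∏ t ∈ Finset.Ico a (N - c), D (v' t) (v' (t+1)) := by rw [mul_one, hX, hZ]
        _ = ∏ t ∈ Finset.range (N - c), D (v' t) (v' (t+1)) := hmerge
        _ ≤ tstar D (v' 0) (v' (N - c)) := ih (N - c) (by omega) v'
        _ = tstar D (v 0) (v N) := hend
end Paths

section Star
variable {n : ℕ} (D : TMat n)

lemma tpow_n_le_tstar (hn : 0 < n) (hD : ∀ c ∈ Finset.Icc 1 n, ttr (tpow D c) ≤ 1)
    (i j : Fin n) : tpow D n i j ≤ tstar D i j := by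
  by_cases h : tpow D n i j = 0
  · rw [h]; exact zero_le
  · obtain ⟨v, hv0, hvN, hle⟩ := exists_path D hn n i j h
    calc tpow D n i j ≤ ∏ t ∈ Finset.range n, D (v t) (v (t+1)) := hle
      _ ≤ tstar D (v 0) (v n) := path_le_tstar D hn hD n v
      _ = tstar D i j := by rw [hv0, hvN]

lemma tmul_tstar_le (hn : 0 < n) (hD : ∀ c ∈ Finset.Icc 1 n, ttr (tpow D c) ≤ 1)
    (i j p : Fin n) : D i j * tstar D j p ≤ tstar D i p := by
  show D i j * (Finset.range n).sup (fun k => tpow D k j p) ≤ _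
  rw [NNReal.mul_finset_sup]
  apply Finset.sup_le
  intro k hk
  rw [Finset.mem_range] at hk
  have h1 : D i j * tpow D k j p ≤ tpow D (k+1) i p := le_tmul D (tpow D k) i j p
  rcases lt_or_eq_of_le (Nat.succ_le_of_lt hk) with h | h
  · exact le_trans h1 (le_tstar D (k+1) h i p)
  · have h' : k + 1 = n := h
    rw [h'] at h1
    exact le_trans h1 (tpow_n_le_tstar D hn hD i p)

/-- The key property of x = tstar D ⊗ u : D ⊗ x ≤ x. -/
lemma star_vec_closed (hn : 0 < n) (hD : ∀ c ∈ Finset.Icc 1 n, ttr (tpow D c) ≤ 1)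
    (u : Fin n → ℝ≥0) (i j : Fin n) :
    D i j * tmulVec (tstar D) u j ≤ tmulVec (tstar D) u i := by
  show D i j * Finset.univ.sup (fun p => tstar D j p * u p) ≤ _
  rw [NNReal.mul_finset_sup]
  apply Finset.sup_le
  intro p _
  calc D i j * (tstar D j p * u p) = (D i j * tstar D j p) * u p := by ring
    _ ≤ tstar D i p * u p := mul_le_mul_left (tmul_tstar_le D hn hD i j p) _
    _ ≤ tmulVec (tstar D) u i := Finset.le_sup (f := fun p => tstar D i p * u p)
        (Finset.mem_univ p)

lemma star_vec_pos (hn : 0 < n) (u : Fin n → ℝ≥0) (hu : ∀ i, 0 < u i) (i : Fin n) :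
    0 < tmulVec (tstar D) u i := by
  have h1 : tstar D i i * u i ≤ tmulVec (tstar D) u i :=
    Finset.le_sup (f := fun p => tstar D i p * u p) (Finset.mem_univ i)
  have h2 : (1 : ℝ≥0) ≤ tstar D i i := by
    have := le_tstar D 0 hn i i
    simpa [tpow, tId] using this
  calc (0:ℝ≥0) < u i := hu i
    _ = 1 * u i := (one_mul _).symm
    _ ≤ tstar D i i * u i := mul_le_mul_left h2 _
    _ ≤ _ := h1
end Star

section Bnd
variable {n : ℕ} {x : Fin n → ℝ≥0}

lemma fobj_le_iff {M : TMat n} {c : ℝ≥0} (hx : ∀ i, 0 < x i) :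
    fobj M x ≤ c ↔ ∀ i j, M i j * x j ≤ c * x i := by
  constructor
  · intro h i j
    have h1 : M i j * x j / x i ≤ c := le_trans (Finset.le_sup
      (f := fun p : Fin n × Fin n => M p.1 p.2 * x p.2 / x p.1) (Finset.mem_univ (i, j))) h
    exact (div_le_iff₀ (hx i)).mp h1
  · intro h
    apply Finset.sup_le
    rintro ⟨i, j⟩ -
    rw [div_le_iff₀ (hx i)]
    exact h i j

lemma bnd_tmul {M N : TMat n} {c d : ℝ≥0}
    (hM : ∀ i j, M i j * x j ≤ c * x i) (hN : ∀ i j, N i j * x j ≤ d * x i) :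
    ∀ i j, tmul M N i j * x j ≤ (c * d) * x i := by
  intro i j
  show Finset.univ.sup (fun k => M i k * N k j) * x j ≤ _
  rw [NNReal.finset_sup_mul]
  apply Finset.sup_le
  intro k _
  calc M i k * N k j * x j = M i k * (N k j * x j) := by ring
    _ ≤ M i k * (d * x k) := mul_le_mul_right (hN k j) _
    _ = d * (M i k * x k) := by ring
    _ ≤ d * (c * x i) := mul_le_mul_right (hM i k) _
    _ = (c * d) * x i := by ring

lemma bnd_tId : ∀ i j, tId n i j * x j ≤ 1 * x i := by
  intro i j
  by_cases h : i = j <;> simp [tId, h]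

lemma bnd_tpow {M : TMat n} {c : ℝ≥0} (hM : ∀ i j, M i j * x j ≤ c * x i) (k : ℕ) :
    ∀ i j, tpow M k i j * x j ≤ c ^ k * x i := by
  induction k with
  | zero => simpa [tpow] using bnd_tId
  | succ k ih =>
    have := bnd_tmul hM ih
    intro i j
    calc tpow M (k+1) i j * x j ≤ (c * c ^ k) * x i := this i j
      _ = c ^ (k+1) * x i := by rw [pow_succ]; ring_nf

lemma bnd_ttr {M : TMat n} {c : ℝ≥0} (hx : ∀ i, 0 < x i)
    (hM : ∀ i j, M i j * x j ≤ c * x i) : ttr M ≤ c := by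
  rw [ttr_le_iff]
  intro i
  exact le_of_mul_le_mul_right (by simpa [mul_comm] using hM i i) (hx i)

lemma bnd_blkchain {A B : TMat n} {a b : ℝ≥0}
    (hA : ∀ i j, A i j * x j ≤ a * x i) (hB : ∀ i j, B i j * x j ≤ b * x i) (g : List ℕ) :
    ∀ i j, lchain (g.map (blk A B)) i j * x j ≤ (a ^ g.sum * b ^ g.length) * x i := by
  induction g with
  | nil => simpa using bnd_tId
  | cons h t ih =>
    have hblk : ∀ i j, blk A B h i j * x j ≤ (a ^ h * b) * x i := bnd_tmul (bnd_tpow hA h) hB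
    intro i j
    have := bnd_tmul hblk ih i j
    calc lchain ((h :: t).map (blk A B)) i j * x j
        ≤ ((a ^ h * b) * (a ^ t.sum * b ^ t.length)) * x i := this
      _ = (a ^ (h :: t).sum * b ^ (h :: t).length) * x i := by
          rw [List.sum_cons, List.length_cons, pow_add, pow_succ]; ring_nf
end Bnd

section Rpow

lemma root_mul_neg_eq (r s : ℝ≥0) (k m : ℕ) :
    r ^ ((1:ℝ)/k) * s ^ (-(m:ℝ)/k) = (r / s ^ m) ^ ((1:ℝ)/k) := by
  have h1 : s ^ (-(m:ℝ)/k) = ((s ^ m : ℝ≥0) ^ ((1:ℝ)/k))⁻¹ := by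
    rw [← NNReal.rpow_natCast s m, ← NNReal.rpow_mul, ← NNReal.rpow_neg]
    congr 1
    push_cast
    ring
  rw [h1, NNReal.div_rpow]
  rfl

lemma root_le_iff {x y : ℝ≥0} {k : ℕ} (hk : k ≠ 0) :
    x ^ ((1:ℝ)/k) ≤ y ↔ x ≤ y ^ k := by
  have hk0 : (0:ℝ) < (k:ℝ) := by
    have := Nat.pos_of_ne_zero hk
    exact_mod_cast this
  rw [← NNReal.rpow_le_rpow_iff hk0, ← NNReal.rpow_mul, one_div,
    inv_mul_cancel₀ hk0.ne', NNReal.rpow_one, NNReal.rpow_natCast]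

lemma rpow_root_le_iff {r s b : ℝ≥0} {k m : ℕ} (hk : k ≠ 0) (hs : s ≠ 0) :
    r ^ ((1:ℝ)/k) * s ^ (-(m:ℝ)/k) ≤ b ↔ r ≤ b ^ k * s ^ m := by
  rw [root_mul_neg_eq, root_le_iff hk, div_le_iff₀ (by positivity : (0:ℝ≥0) < s ^ m)]

lemma le_rpow_root_iff {r s a : ℝ≥0} {k m : ℕ} (hm : m ≠ 0) (hs : s ≠ 0) :
    a ≤ r ^ ((1:ℝ)/m) * s ^ (-(k:ℝ)/m) ↔ a ^ m * s ^ k ≤ r := by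
  rw [root_mul_neg_eq]
  have hm0 : (0:ℝ) < (m:ℝ) := by
    have := Nat.pos_of_ne_zero hm
    exact_mod_cast this
  rw [← NNReal.rpow_le_rpow_iff hm0 (x := a), ← NNReal.rpow_mul, one_div,
    inv_mul_cancel₀ hm0.ne', NNReal.rpow_one, NNReal.rpow_natCast,
    le_div_iff₀ (by positivity : (0:ℝ≥0) < s ^ k)]

lemma rpow_neg_anti {a b : ℝ≥0} (ha : a ≠ 0) (hab : a ≤ b) {c : ℝ} (hc : 0 ≤ c) :
    b ^ (-c) ≤ a ^ (-c) := by
  rw [NNReal.rpow_neg, NNReal.rpow_neg]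
  have h1 : a ^ c ≤ b ^ c := NNReal.rpow_le_rpow hab hc
  have h2 : 0 < a ^ c := NNReal.rpow_pos (pos_iff_ne_zero.mpr ha)
  gcongr

lemma rpow_neg_strict_anti {a b : ℝ≥0} (ha : 0 < a) (hab : a < b) {c : ℝ} (hc : 0 < c) :
    b ^ (-c) < a ^ (-c) := by
  rw [NNReal.rpow_neg, NNReal.rpow_neg]
  have h1 : a ^ c < b ^ c := NNReal.rpow_lt_rpow hab hc
  have h2 : 0 < a ^ c := NNReal.rpow_pos ha
  gcongr

end Rpow

section Interface
variable {n : ℕ} (A B : TMat n)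

lemma ttr_tpow_le_pow_specRad {k : ℕ} (hk1 : 1 ≤ k) (hkn : k ≤ n) :
    ttr (tpow A k) ≤ specRad A ^ k := by
  have h1 : ttr (tpow A k) ^ ((1:ℝ)/k) ≤ specRad A :=
    Finset.le_sup (f := fun k => ttr (tpow A k) ^ ((1:ℝ)/k)) (Finset.mem_Icc.mpr ⟨hk1, hkn⟩)
  exact (root_le_iff (by omega)).mp h1

lemma specRad_le {a : ℝ≥0} (h : ∀ k, 1 ≤ k → k ≤ n → ttr (tpow A k) ≤ a ^ k) :
    specRad A ≤ a := by
  apply Finset.sup_le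
  intro k hk
  rw [Finset.mem_Icc] at hk
  exact (root_le_iff (by omega)).mpr (h k hk.1 hk.2)

lemma Gfun0_le_iff {s b : ℝ≥0} (hs : s ≠ 0) :
    Gfun0 A B s ≤ b ↔
      ∀ k m, 1 ≤ k → k ≤ n - 1 → 1 ≤ m → m ≤ n - k → rkm A B k m ≤ b ^ k * s ^ m := by
  constructor
  · intro h k m hk1 hk2 hm1 hm2
    have h1 : rkm A B k m ^ ((1:ℝ)/k) * s ^ (-(m:ℝ)/k) ≤ Gfun0 A B s := by
      refine le_trans (Finset.le_sup (f := fun m =>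
        rkm A B k m ^ ((1:ℝ)/k) * s ^ (-(m:ℝ)/k)) (Finset.mem_Icc.mpr ⟨hm1, hm2⟩)) ?_
      exact Finset.le_sup (f := fun k => (Finset.Icc 1 (n-k)).sup fun m =>
        rkm A B k m ^ ((1:ℝ)/k) * s ^ (-(m:ℝ)/k)) (Finset.mem_Icc.mpr ⟨hk1, hk2⟩)
    exact (rpow_root_le_iff (by omega) hs).mp (h1.trans h)
  · intro h
    apply Finset.sup_le
    intro k hk
    rw [Finset.mem_Icc] at hk
    apply Finset.sup_le
    intro m hm
    rw [Finset.mem_Icc] at hm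
    exact (rpow_root_le_iff (by omega) hs).mpr (h k m hk.1 hk.2 hm.1 hm.2)

lemma exists_of_le_Hfun0 {t a : ℝ≥0} (ha : 0 < a) (h : a ≤ Hfun0 A B t) :
    ∃ k m, 1 ≤ k ∧ k ≤ n - 1 ∧ 1 ≤ m ∧ m ≤ n - k ∧
      a ≤ rkm A B k m ^ ((1:ℝ)/m) * t ^ (-(k:ℝ)/m) := by
  rw [Hfun0, Finset.le_sup_iff ha] at h
  obtain ⟨k, hk, h⟩ := h
  rw [Finset.le_sup_iff ha] at h
  obtain ⟨m, hm, h⟩ := h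
  rw [Finset.mem_Icc] at hk hm
  exact ⟨k, m, hk.1, hk.2, hm.1, hm.2, h⟩

/-- If 0 < α ≤ H(s) then s ≤ G(α). -/
lemma le_Gfun0_of_le_Hfun0 {s α : ℝ≥0} (hs : s ≠ 0) (hα : 0 < α) (h : α ≤ Hfun0 A B s) :
    s ≤ Gfun0 A B α := by
  obtain ⟨k, m, hk1, hk2, hm1, hm2, hle⟩ := exists_of_le_Hfun0 A B hα h
  have h1 : α ^ m * s ^ k ≤ rkm A B k m := (le_rpow_root_iff (by omega) hs).mp hle
  have h2 : s ≤ rkm A B k m ^ ((1:ℝ)/k) * α ^ (-(m:ℝ)/k) := by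
    rw [le_rpow_root_iff (by omega) hα.ne']
    calc s ^ k * α ^ m = α ^ m * s ^ k := mul_comm _ _
      _ ≤ rkm A B k m := h1
  refine h2.trans ?_
  refine le_trans (Finset.le_sup (f := fun m =>
      rkm A B k m ^ ((1:ℝ)/k) * α ^ (-(m:ℝ)/k)) (Finset.mem_Icc.mpr ⟨hm1, hm2⟩)) ?_
  exact Finset.le_sup (f := fun k => (Finset.Icc 1 (n-k)).sup fun m =>
      rkm A B k m ^ ((1:ℝ)/k) * α ^ (-(m:ℝ)/k)) (Finset.mem_Icc.mpr ⟨hk1, hk2⟩)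

/-- G(H(s)) ≤ s. -/
lemma Gfun0_Hfun0_le {s : ℝ≥0} (hs : s ≠ 0) (hH : Hfun0 A B s ≠ 0) :
    Gfun0 A B (Hfun0 A B s) ≤ s := by
  rw [Gfun0_le_iff A B hH]
  intro k m hk1 hk2 hm1 hm2
  have h1 : rkm A B k m ^ ((1:ℝ)/m) * s ^ (-(k:ℝ)/m) ≤ Hfun0 A B s := by
    refine le_trans (Finset.le_sup (f := fun m =>
      rkm A B k m ^ ((1:ℝ)/m) * s ^ (-(k:ℝ)/m)) (Finset.mem_Icc.mpr ⟨hm1, hm2⟩)) ?_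
    exact Finset.le_sup (f := fun k => (Finset.Icc 1 (n-k)).sup fun m =>
      rkm A B k m ^ ((1:ℝ)/m) * s ^ (-(k:ℝ)/m)) (Finset.mem_Icc.mpr ⟨hk1, hk2⟩)
  have h2 : rkm A B k m ≤ Hfun0 A B s ^ m * s ^ k := (rpow_root_le_iff (by omega) hs).mp h1
  calc rkm A B k m ≤ Hfun0 A B s ^ m * s ^ k := h2
    _ = s ^ k * Hfun0 A B s ^ m := mul_comm _ _

lemma Gfun0_anti {a b : ℝ≥0} (ha : a ≠ 0) (hab : a ≤ b) : Gfun0 A B b ≤ Gfun0 A B a := by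
  apply Finset.sup_le
  intro k hk
  apply Finset.sup_le
  intro m hm
  rw [Finset.mem_Icc] at hk hm
  have h1 : b ^ (-(m:ℝ)/k) ≤ a ^ (-(m:ℝ)/k) := by
    have : -(m:ℝ)/k = -((m:ℝ)/k) := by ring
    rw [this]
    exact rpow_neg_anti ha hab (by positivity)
  refine le_trans (mul_le_mul_right h1 _) ?_
  refine le_trans (Finset.le_sup (f := fun m =>
    rkm A B k m ^ ((1:ℝ)/k) * a ^ (-(m:ℝ)/k)) (Finset.mem_Icc.mpr hm)) ?_
  exact Finset.le_sup (f := fun k => (Finset.Icc 1 (n-k)).sup fun m =>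
    rkm A B k m ^ ((1:ℝ)/k) * a ^ (-(m:ℝ)/k)) (Finset.mem_Icc.mpr hk)

/-- Strict decrease of G on positive arguments, where G is positive. -/
lemma Gfun0_strict_anti {a b : ℝ≥0} (ha : 0 < a) (hab : a < b) (hG : 0 < Gfun0 A B b) :
    Gfun0 A B b < Gfun0 A B a := by
  -- the sup defining Gfun0 A B b is attained
  have hne : (Finset.Icc 1 (n-1)).Nonempty := by
    by_contra h
    rw [Finset.not_nonempty_iff_eq_empty] at h
    rw [Gfun0, h] at hG
    simp at hG
  obtain ⟨k, hk, hk'⟩ := Finset.exists_mem_eq_sup _ hne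
    (fun k => (Finset.Icc 1 (n-k)).sup fun m => rkm A B k m ^ ((1:ℝ)/k) * b ^ (-(m:ℝ)/k))
  have hGb : Gfun0 A B b = (Finset.Icc 1 (n-k)).sup
      fun m => rkm A B k m ^ ((1:ℝ)/k) * b ^ (-(m:ℝ)/k) := hk'
  have hne2 : (Finset.Icc 1 (n-k)).Nonempty := by
    by_contra h
    rw [Finset.not_nonempty_iff_eq_empty] at h
    rw [hGb, h] at hG
    simp at hG
  obtain ⟨m, hm, hm'⟩ := Finset.exists_mem_eq_sup _ hne2
    (fun m => rkm A B k m ^ ((1:ℝ)/k) * b ^ (-(m:ℝ)/k))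
  rw [Finset.mem_Icc] at hk hm
  have hGb2 : Gfun0 A B b = rkm A B k m ^ ((1:ℝ)/k) * b ^ (-(m:ℝ)/k) := by rw [hGb, hm']
  have hr : 0 < rkm A B k m := by
    by_contra h
    push_neg at h
    have : rkm A B k m = 0 := le_antisymm h zero_le
    have hk0 : (0:ℝ) < (k:ℝ) := by exact_mod_cast Nat.lt_of_lt_of_le Nat.zero_lt_one hk.1
    rw [hGb2, this, NNReal.zero_rpow (by positivity), zero_mul] at hG
    exact lt_irrefl _ hG
  have hstrict : rkm A B k m ^ ((1:ℝ)/k) * b ^ (-(m:ℝ)/k)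
      < rkm A B k m ^ ((1:ℝ)/k) * a ^ (-(m:ℝ)/k) := by
    have h1 : b ^ (-(m:ℝ)/k) < a ^ (-(m:ℝ)/k) := by
      have heq : -(m:ℝ)/k = -((m:ℝ)/k) := by ring
      rw [heq]
      refine rpow_neg_strict_anti ha hab ?_
      have hm0 : (0:ℝ) < (m:ℝ) := by exact_mod_cast Nat.lt_of_lt_of_le Nat.zero_lt_one hm.1
      have hk0 : (0:ℝ) < (k:ℝ) := by exact_mod_cast Nat.lt_of_lt_of_le Nat.zero_lt_one hk.1
      positivity
    have h2 : 0 < rkm A B k m ^ ((1:ℝ)/k) := NNReal.rpow_pos hr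
    exact mul_lt_mul_of_pos_left h1 h2
  rw [hGb2]
  refine lt_of_lt_of_le hstrict ?_
  refine le_trans (Finset.le_sup (f := fun m =>
    rkm A B k m ^ ((1:ℝ)/k) * a ^ (-(m:ℝ)/k)) (Finset.mem_Icc.mpr hm)) ?_
  exact Finset.le_sup (f := fun k => (Finset.Icc 1 (n-k)).sup fun m =>
    rkm A B k m ^ ((1:ℝ)/k) * a ^ (-(m:ℝ)/k)) (Finset.mem_Icc.mpr hk)

end Interface

section Master
variable {n : ℕ} (A B : TMat n)

lemma rkm_le_bound {x : Fin n → ℝ≥0} {a b : ℝ≥0}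
    (hx : ∀ i, 0 < x i)
    (hA : ∀ i j, A i j * x j ≤ a * x i) (hB : ∀ i j, B i j * x j ≤ b * x i) (k m : ℕ) :
    rkm A B k m ≤ a ^ m * b ^ k := by
  apply Finset.sup_le
  intro f hf
  rw [tuples, Finset.mem_filter] at hf
  set g : List ℕ := List.ofFn (fun t => ((f t : Fin (m+1)) : ℕ)) with hg
  have hsum : g.sum = m := by
    rw [hg, List.sum_ofFn]
    exact hf.2
  have hlen : g.length = k := by rw [hg, List.length_ofFn]
  have hchain : (tchain k fun t => tmul (tpow A ((f t : Fin (m+1)) : ℕ)) B)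
      = lchain (g.map (blk A B)) := by
    rw [tchain_eq_lchain, hg, List.map_ofFn]
    rfl
  rw [hchain]
  have := bnd_ttr hx (bnd_blkchain hA hB g)
  rw [hsum, hlen] at this
  exact this

/-- Lower bounds valid for every positive vector. -/
lemma fobj_lower (x : Fin n → ℝ≥0) (hx : ∀ i, 0 < x i) :
    specRad A ≤ fobj A x ∧ specRad B ≤ fobj B x ∧
      ∀ k m, rkm A B k m ≤ fobj A x ^ m * fobj B x ^ k := by
  have hA : ∀ i j, A i j * x j ≤ fobj A x * x i := (fobj_le_iff hx).mp le_rfl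
  have hB : ∀ i j, B i j * x j ≤ fobj B x * x i := (fobj_le_iff hx).mp le_rfl
  refine ⟨?_, ?_, rkm_le_bound A B hx hA hB⟩
  · exact specRad_le A fun k _ _ => bnd_ttr hx (bnd_tpow hA k)
  · exact specRad_le B fun k _ _ => bnd_ttr hx (bnd_tpow hB k)

lemma Gfun0_le_fobj (x : Fin n → ℝ≥0) (hx : ∀ i, 0 < x i) (ha : fobj A x ≠ 0) :
    Gfun0 A B (fobj A x) ≤ fobj B x := by
  rw [Gfun0_le_iff A B ha]
  intro k m _ _ _ _
  rw [mul_comm]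
  exact (fobj_lower A B x hx).2.2 k m

/-- The trace condition for D = α⁻¹A ⊕ β⁻¹B. -/
lemma trace_cond (hn : 0 < n) {α β : ℝ≥0} (hα : α ≠ 0) (hβ : β ≠ 0)
    (hA : ∀ k, 1 ≤ k → k ≤ n → ttr (tpow A k) ≤ α ^ k)
    (hB : ∀ k, 1 ≤ k → k ≤ n → ttr (tpow B k) ≤ β ^ k)
    (hr : ∀ k m, 1 ≤ k → k ≤ n - 1 → 1 ≤ m → m ≤ n - k → rkm A B k m ≤ β ^ k * α ^ m) :
    ∀ c ∈ Finset.Icc 1 n, ttr (tpow (tadd (tsmul α⁻¹ A) (tsmul β⁻¹ B)) c) ≤ 1 := by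
  intro c hc
  rw [Finset.mem_Icc] at hc
  rw [ttr_le_iff]
  intro i
  obtain ⟨w, hwlen, hwle⟩ := exists_word hn (tsmul α⁻¹ A) (tsmul β⁻¹ B) c i i
  refine le_trans hwle ?_
  refine le_trans (le_ttr _ i) ?_
  rw [wmat_tsmul, ttr_tsmul]
  set l := w.count true with hl
  set m := w.count false with hm
  have hml : l + m = c := by rw [hl, hm, ← hwlen]; exact count_true_add_count_false w
  have key : ttr (wmat A B w) ≤ α ^ m * β ^ l := by
    rcases Nat.eq_zero_or_pos l with hl0 | hlpos
    · -- no B's: w is all false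
      have hnot : true ∉ w := by
        rw [← List.count_pos_iff]
        omega
      have hall : ∀ b ∈ w, b = false := by
        intro b hb
        cases b
        · rfl
        · exact absurd hb hnot
      have hw : w = List.replicate c false := by
        rw [List.eq_replicate_of_mem hall, hwlen]
      have hmc : m = c := by omega
      have hwmat : wmat A B w = tpow A c := by
        rw [hw, tpow_eq_lchain]
        show lchain ((List.replicate c false).map _) = _
        rw [List.map_replicate]
        rfl
      rw [hwmat, hl0, hmc, pow_zero, mul_one]
      exact hA c hc.1 hc.2
    · rcases Nat.eq_zero_or_pos m with hm0 | hmpos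
      · -- no A's: w is all true
        have hnot : false ∉ w := by
          rw [← List.count_pos_iff]
          omega
        have hall : ∀ b ∈ w, b = true := by
          intro b hb
          cases b
          · exact absurd hb hnot
          · rfl
        have hw : w = List.replicate c true := by
          rw [List.eq_replicate_of_mem hall, hwlen]
        have hlc : l = c := by omega
        have hwmat : wmat A B w = tpow B c := by
          rw [hw, tpow_eq_lchain]
          show lchain ((List.replicate c true).map _) = _
          rw [List.map_replicate]
          rfl
        rw [hwmat, hm0, hlc, pow_zero, one_mul]
        exact hB c hc.1 hc.2
      · -- mixed word
        have htrue : true ∈ w := by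
          rw [← List.count_pos_iff]
          omega
        have h1 : ttr (wmat A B w) ≤ rkm A B l m := ttr_word_le_rkm A B w htrue
        have h2 : rkm A B l m ≤ β ^ l * α ^ m :=
          hr l m hlpos (by omega) hmpos (by omega)
        rw [mul_comm] at h2
        exact h1.trans h2
  calc α⁻¹ ^ m * β⁻¹ ^ l * ttr (wmat A B w) ≤ α⁻¹ ^ m * β⁻¹ ^ l * (α ^ m * β ^ l) :=
        mul_le_mul_right key _
    _ = (α⁻¹ * α) ^ m * (β⁻¹ * β) ^ l := by ring
    _ = 1 := by rw [inv_mul_cancel₀ hα, inv_mul_cancel₀ hβ, one_pow, one_pow, mul_one]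

end Master

section Endgame
variable {n : ℕ} (A B : TMat n)

lemma part2_main (hn : 0 < n) (hlam : 0 < specRad A) (hmu : 0 < specRad B) {α : ℝ≥0}
    (h1 : specRad A ≤ α) (h2 : α ≤ Hfun0 A B (specRad B)) (u : Fin n → ℝ≥0)
    (hu : ∀ i, 0 < u i) :
    (∀ i, 0 < tmulVec (tstar (tadd (tsmul α⁻¹ A) (tsmul (Gfun0 A B α)⁻¹ B))) u i) ∧
    fobj A (tmulVec (tstar (tadd (tsmul α⁻¹ A) (tsmul (Gfun0 A B α)⁻¹ B))) u) ≤ α ∧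
    fobj B (tmulVec (tstar (tadd (tsmul α⁻¹ A) (tsmul (Gfun0 A B α)⁻¹ B))) u) ≤
      Gfun0 A B α := by
  have hα : 0 < α := lt_of_lt_of_le hlam h1
  set β := Gfun0 A B α with hβdef
  have hβmu : specRad B ≤ β := le_Gfun0_of_le_Hfun0 A B hmu.ne' hα h2
  have hβ : 0 < β := lt_of_lt_of_le hmu hβmu
  set D := tadd (tsmul α⁻¹ A) (tsmul β⁻¹ B) with hD
  have htr : ∀ c ∈ Finset.Icc 1 n, ttr (tpow D c) ≤ 1 := by
    apply trace_cond A B hn hα.ne' hβ.ne'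
    · intro k hk1 hk2
      exact le_trans (ttr_tpow_le_pow_specRad A hk1 hk2) (pow_le_pow_left' h1 k)
    · intro k hk1 hk2
      exact le_trans (ttr_tpow_le_pow_specRad B hk1 hk2) (pow_le_pow_left' hβmu k)
    · exact fun k m hk1 hk2 hm1 hm2 =>
        (Gfun0_le_iff A B hα.ne').mp le_rfl k m hk1 hk2 hm1 hm2
  set x := tmulVec (tstar D) u with hx
  have hxpos : ∀ i, 0 < x i := star_vec_pos D hn u hu
  have hclosed : ∀ i j, D i j * x j ≤ x i := fun i j => star_vec_closed D hn htr u i j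
  refine ⟨hxpos, ?_, ?_⟩
  · rw [fobj_le_iff hxpos]
    intro i j
    have hle : α⁻¹ * A i j ≤ D i j := le_sup_left
    calc A i j * x j = α * (α⁻¹ * A i j * x j) := by
          rw [← mul_assoc, ← mul_assoc, mul_inv_cancel₀ hα.ne', one_mul]
      _ ≤ α * (D i j * x j) := mul_le_mul_right (mul_le_mul_left hle _) _
      _ ≤ α * x i := mul_le_mul_right (hclosed i j) _
  · rw [fobj_le_iff hxpos]
    intro i j
    have hle : β⁻¹ * B i j ≤ D i j := le_sup_right
    calc B i j * x j = β * (β⁻¹ * B i j * x j) := by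
          rw [← mul_assoc, ← mul_assoc, mul_inv_cancel₀ hβ.ne', one_mul]
      _ ≤ β * (D i j * x j) := mul_le_mul_right (mul_le_mul_left hle _) _
      _ ≤ β * x i := mul_le_mul_right (hclosed i j) _

/-- For λ ≤ α ≤ H(μ), the point (α, G(α)) is attained. -/
lemma point_mem (hn : 0 < n) (hlam : 0 < specRad A) (hmu : 0 < specRad B) {α : ℝ≥0}
    (h1 : specRad A ≤ α) (h2 : α ≤ Hfun0 A B (specRad B)) :
    ∃ x : Fin n → ℝ≥0, (∀ i, 0 < x i) ∧ fobj A x = α ∧ fobj B x = Gfun0 A B α := by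
  have hα : 0 < α := lt_of_lt_of_le hlam h1
  set β := Gfun0 A B α with hβdef
  have hβmu : specRad B ≤ β := le_Gfun0_of_le_Hfun0 A B hmu.ne' hα h2
  have hβ : 0 < β := lt_of_lt_of_le hmu hβmu
  obtain ⟨hxpos, hfa, hfb⟩ := part2_main A B hn hlam hmu h1 h2 (fun _ => 1) (fun _ => one_pos)
  set x := tmulVec (tstar (tadd (tsmul α⁻¹ A) (tsmul β⁻¹ B))) (fun _ => 1) with hx
  set a := fobj A x with ha
  set b := fobj B x with hb
  have hla : specRad A ≤ a := (fobj_lower A B x hxpos).1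
  have hapos : 0 < a := lt_of_lt_of_le hlam hla
  have hGa : Gfun0 A B a ≤ b := Gfun0_le_fobj A B x hxpos hapos.ne'
  have hbβ : β ≤ b := le_trans (Gfun0_anti A B hapos.ne' hfa) hGa
  have hbeq : b = β := le_antisymm hfb hbβ
  have haeq : a = α := by
    by_contra hne
    have halt : a < α := lt_of_le_of_ne hfa hne
    have hlt : Gfun0 A B α < Gfun0 A B a := Gfun0_strict_anti A B hapos halt hβ
    have : β < β := by
      calc β < Gfun0 A B a := hlt
        _ ≤ b := hGa
        _ = β := hbeq
    exact lt_irrefl _ this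
  exact ⟨x, hxpos, haeq, hbeq⟩

end Endgame

/-- Unconstrained case with H(μ) > λ: the set of Pareto-minimal points of V is the segment
{(α, G(α)) : λ ≤ α ≤ H(μ)}; moreover, for each such α, every vector
x = (α⁻¹A ⊕ G(α)⁻¹B)* ⊗ u with u positive satisfies f_A(x) ≤ α and f_B(x) ≤ G(α). -/
theorem stmt18 {n : ℕ} (A B : TMat n)
    (hlam : 0 < specRad A) (hmu : 0 < specRad B)
    (hH : specRad A < Hfun0 A B (specRad B)) :
    ({p | ParetoMin (V0 A B) p} =
      {p | ∃ α : ℝ≥0, specRad A ≤ α ∧ α ≤ Hfun0 A B (specRad B) ∧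
        p = (α, Gfun0 A B α)}) ∧
    (∀ α : ℝ≥0, specRad A ≤ α → α ≤ Hfun0 A B (specRad B) →
      ∀ u : Fin n → ℝ≥0, (∀ i, 0 < u i) →
        fobj A (tmulVec (tstar (tadd (tsmul α⁻¹ A) (tsmul (Gfun0 A B α)⁻¹ B))) u) ≤ α ∧
        fobj B (tmulVec (tstar (tadd (tsmul α⁻¹ A) (tsmul (Gfun0 A B α)⁻¹ B))) u) ≤
          Gfun0 A B α) := by
  have hn : 0 < n := by
    by_contra h
    push_neg at h
    have hn0 : n = 0 := by omega
    subst hn0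
    rw [specRad, Finset.Icc_eq_empty (by omega), Finset.sup_empty] at hlam
    exact lt_irrefl _ hlam
  have hHpos : 0 < Hfun0 A B (specRad B) := lt_trans hlam hH
  constructor
  · ext p
    simp only [Set.mem_setOf_eq]
    constructor
    · rintro ⟨⟨x, hxpos, hpeq⟩, hmin⟩
      obtain ⟨hla, hmb, -⟩ := fobj_lower A B x hxpos
      have hapos : 0 < fobj A x := lt_of_lt_of_le hlam hla
      have hGab : Gfun0 A B (fobj A x) ≤ fobj B x := Gfun0_le_fobj A B x hxpos hapos.ne'
      by_cases hcase : fobj A x ≤ Hfun0 A B (specRad B)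
      · refine ⟨fobj A x, hla, hcase, ?_⟩
        obtain ⟨y, hy, hya, hyb⟩ := point_mem A B hn hlam hmu hla hcase
        have hbG : fobj B x = Gfun0 A B (fobj A x) := by
          by_contra hne
          have hqlt : Gfun0 A B (fobj A x) ≠ fobj B x := fun h => hne h.symm
          apply hmin
          refine ⟨(fobj A y, fobj B y), ⟨y, hy, rfl⟩, ?_, ?_, ?_⟩
          · rw [hya, hpeq]
          · rw [hyb, hpeq]; exact hGab
          · rw [hya, hyb, hpeq]
            intro hcontra
            exact hqlt (congrArg Prod.snd hcontra)
        rw [hpeq, hbG]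
      · exfalso
        push_neg at hcase
        obtain ⟨y, hy, hya, hyb⟩ := point_mem A B hn hlam hmu hH.le le_rfl
        have hGH : Gfun0 A B (Hfun0 A B (specRad B)) ≤ specRad B :=
          Gfun0_Hfun0_le A B hmu.ne' hHpos.ne'
        apply hmin
        refine ⟨(fobj A y, fobj B y), ⟨y, hy, rfl⟩, ?_, ?_, ?_⟩
        · rw [hya, hpeq]; exact hcase.le
        · rw [hyb, hpeq]; exact le_trans hGH hmb
        · rw [hya, hpeq]
          intro hcontra
          have := congrArg Prod.fst hcontra
          simp only at this
          exact absurd this (ne_of_lt hcase)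
    · rintro ⟨α, h1, h2, rfl⟩
      have hα : 0 < α := lt_of_lt_of_le hlam h1
      have hGpos : 0 < Gfun0 A B α :=
        lt_of_lt_of_le hmu (le_Gfun0_of_le_Hfun0 A B hmu.ne' hα h2)
      obtain ⟨x, hxpos, hfa, hfb⟩ := point_mem A B hn hlam hmu h1 h2
      constructor
      · exact ⟨x, hxpos, by rw [hfa, hfb]⟩
      · rintro ⟨q, ⟨y, hy, rfl⟩, hq1, hq2, hqne⟩
        simp only at hq1 hq2
        obtain ⟨hla, -, -⟩ := fobj_lower A B y hy
        have hapos : 0 < fobj A y := lt_of_lt_of_le hlam hla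
        have hGab : Gfun0 A B (fobj A y) ≤ fobj B y := Gfun0_le_fobj A B y hy hapos.ne'
        have haα : fobj A y = α := by
          by_contra hne
          have halt : fobj A y < α := lt_of_le_of_ne hq1 hne
          have hlt : Gfun0 A B α < Gfun0 A B (fobj A y) :=
            Gfun0_strict_anti A B hapos halt hGpos
          exact absurd (hlt.trans_le (hGab.trans hq2)) (lt_irrefl _)
        have hbβ : fobj B y = Gfun0 A B α := by
          refine le_antisymm hq2 ?_
          rw [← haα]
          exact hGab
        exact hqne (by rw [haα, hbβ])
  · intro α h1 h2 u hu
    obtain ⟨-, hfa, hfb⟩ := part2_main A B hn hlam hmu h1 h2 u hu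
    exact ⟨hfa, hfb⟩
end

section
/- Let A, B, C be 2×2 matrices over the nonnegative reals with λ = max(a_{11}, a_{22}, (a_{12}a_{21})^{1/2}) > 0, μ = max(b_{11}, b_{22}, (b_{12}b_{21})^{1/2}) > 0 and max(c_{11}, c_{22}, c_{12}c_{21}) ≤ 1. Let V = {(f_A(x), f_B(x)) : x ∈ ℝ² positive, C ⊗ x ≤ x}. If tr(A ⊗ B) ≤ (max(λ, tr(A ⊗ C))) · (max(μ, tr(B ⊗ C))), then the set of Pareto-minimal points of V is the single point (max(λ, tr(A ⊗ C)), max(μ, tr(B ⊗ C))); otherwise it is the segment {(α, tr(A ⊗ B)/α) : max(λ, tr(A ⊗ C)) ≤ α ≤ tr(A ⊗ B)/max(μ, tr(B ⊗ C))}. -/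
open scoped NNReal

/-- Spectral radius of a 2×2 matrix: max(a_{11}, a_{22}, (a_{12}a_{21})^{1/2}). -/
noncomputable def lam2 (A : TMat 2) : ℝ≥0 :=
  A 0 0 ⊔ A 1 1 ⊔ (A 0 1 * A 1 0) ^ ((1 : ℝ) / 2)

/-- The set of objective values over feasible positive vectors (2×2 case). -/
def V2 (A B C : TMat 2) : Set (ℝ≥0 × ℝ≥0) :=
  {p | ∃ x : Fin 2 → ℝ≥0, (∀ i, 0 < x i) ∧ tmulVec C x ≤ x ∧ p = (fobj A x, fobj B x)}


namespace Stmt19Aux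

/-- The objective as a function of the ratio `t = x 1 / x 0`. -/
noncomputable def FF (e p q t : ℝ≥0) : ℝ≥0 := e ⊔ p * t ⊔ q / t

lemma sup2 (f : Fin 2 → ℝ≥0) : Finset.univ.sup f = f 0 ⊔ f 1 := by
  rw [show (Finset.univ : Finset (Fin 2)) = {0, 1} from by decide]
  simp

lemma supP (f : Fin 2 × Fin 2 → ℝ≥0) :
    Finset.univ.sup f = f (0,0) ⊔ f (0,1) ⊔ (f (1,0) ⊔ f (1,1)) := by
  rw [show (Finset.univ : Finset (Fin 2 × Fin 2)) = {(0,0),(0,1),(1,0),(1,1)} from by decide]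
  simp [sup_assoc]

lemma ttr_tmul2 (A B : TMat 2) :
    ttr (tmul A B) = A 0 0 * B 0 0 ⊔ A 0 1 * B 1 0 ⊔ (A 1 0 * B 0 1 ⊔ A 1 1 * B 1 1) := by
  simp only [ttr, tmul, sup2]

lemma sq_of_sqrt {x s : ℝ≥0} (h : x ^ ((1:ℝ)/2) ≤ s) : x ≤ s * s := by
  have h2 := NNReal.rpow_le_rpow h (by norm_num : (0:ℝ) ≤ 2)
  rwa [← NNReal.rpow_mul, show (1:ℝ)/2 * 2 = 1 by norm_num, NNReal.rpow_one,
    show (2:ℝ) = ((2:ℕ):ℝ) by norm_num, NNReal.rpow_natCast, sq] at h2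

lemma sqrt_of_sq {x s : ℝ≥0} (h : x ≤ s * s) : x ^ ((1:ℝ)/2) ≤ s := by
  have h2 := NNReal.rpow_le_rpow h (by norm_num : (0:ℝ) ≤ 1/2)
  rwa [show s * s = s ^ ((2:ℕ):ℝ) by rw [NNReal.rpow_natCast, sq],
    ← NNReal.rpow_mul, show ((2:ℕ):ℝ) * (1/2) = 1 by norm_num, NNReal.rpow_one] at h2

lemma fobj_eq (M : TMat 2) (x : Fin 2 → ℝ≥0) (h0 : 0 < x 0) (h1 : 0 < x 1) :
    fobj M x = FF (M 0 0 ⊔ M 1 1) (M 0 1) (M 1 0) (x 1 / x 0) := by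
  have e0 : x 0 ≠ 0 := h0.ne'
  have e1 : x 1 ≠ 0 := h1.ne'
  rw [fobj, supP]
  have k1 : M 0 0 * x 0 / x 0 = M 0 0 := by
    rw [mul_div_assoc, div_self e0, mul_one]
  have k2 : M 1 1 * x 1 / x 1 = M 1 1 := by
    rw [mul_div_assoc, div_self e1, mul_one]
  have k3 : M 0 1 * x 1 / x 0 = M 0 1 * (x 1 / x 0) := by rw [mul_div_assoc]
  have k4 : M 1 0 * x 0 / x 1 = M 1 0 / (x 1 / x 0) := by
    rw [mul_div_assoc, ← inv_div (x 1) (x 0), ← div_eq_mul_inv]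
  rw [k1, k2, k3, k4, FF]
  rw [sup_comm (M 1 0 / (x 1 / x 0)) (M 1 1), ← sup_assoc, sup_assoc (M 0 0),
    sup_comm (M 0 1 * (x 1 / x 0)) (M 1 1), ← sup_assoc]

lemma mem_V2_iff (A B C : TMat 2) (hC : C 0 0 ⊔ C 1 1 ⊔ C 0 1 * C 1 0 ≤ 1)
    (p : ℝ≥0 × ℝ≥0) :
    p ∈ V2 A B C ↔ ∃ t : ℝ≥0, 0 < t ∧ C 1 0 ≤ t ∧ C 0 1 * t ≤ 1 ∧
      p = (FF (A 0 0 ⊔ A 1 1) (A 0 1) (A 1 0) t, FF (B 0 0 ⊔ B 1 1) (B 0 1) (B 1 0) t) := by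
  have hC00 : C 0 0 ≤ 1 := le_trans (le_trans le_sup_left le_sup_left) hC
  have hC11 : C 1 1 ≤ 1 := le_trans (le_trans le_sup_right le_sup_left) hC
  constructor
  · rintro ⟨x, hx, hcx, rfl⟩
    have e0 : x 0 ≠ 0 := (hx 0).ne'
    refine ⟨x 1 / x 0, ?_, ?_, ?_, ?_⟩
    · exact pos_iff_ne_zero.2 (div_ne_zero (hx 1).ne' e0)
    · rw [le_div_iff₀ (hx 0)]
      have h := hcx 1
      rw [tmulVec, sup2] at h
      exact le_trans le_sup_left h
    · have h := hcx 0
      rw [tmulVec, sup2] at h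
      rw [← mul_div_assoc, div_le_iff₀ (hx 0), one_mul]
      exact le_trans le_sup_right h
    · rw [fobj_eq A x (hx 0) (hx 1), fobj_eq B x (hx 0) (hx 1)]
  · rintro ⟨t, ht, hc, hd, rfl⟩
    refine ⟨![1, t], ?_, ?_, ?_⟩
    · intro i
      fin_cases i <;> simp [ht]
    · intro i
      fin_cases i <;> rw [tmulVec, sup2] <;> simp only [Matrix.cons_val_zero,
        Matrix.cons_val_one, Matrix.head_cons, Fin.isValue] <;>
        [skip; skip]
      · exact sup_le (by simpa using hC00) hd
      · exact sup_le (by simpa using hc)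
          (by simpa using mul_le_of_le_one_left zero_le hC11)
    · rw [fobj_eq A _ (by norm_num) (by simpa using ht),
        fobj_eq B _ (by norm_num) (by simpa using ht)]
      simp

lemma prod_eq {p v t : ℝ≥0} (ht : t ≠ 0) : p * t * (v / t) = p * v := by
  field_simp

lemma lam_ttr_le_FF (A C : TMat 2) (hC00 : C 0 0 ≤ 1) (hC11 : C 1 1 ≤ 1)
    (t : ℝ≥0) (ht : 0 < t) (hc : C 1 0 ≤ t) (hd : C 0 1 * t ≤ 1) :
    lam2 A ⊔ ttr (tmul A C) ≤ FF (A 0 0 ⊔ A 1 1) (A 0 1) (A 1 0) t := by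
  set s := FF (A 0 0 ⊔ A 1 1) (A 0 1) (A 1 0) t with hs
  have he : A 0 0 ⊔ A 1 1 ≤ s := le_sup_of_le_left le_sup_left
  have hpt : A 0 1 * t ≤ s := le_sup_of_le_left le_sup_right
  have hqt : A 1 0 / t ≤ s := le_sup_right
  have hsq : (A 0 1 * A 1 0) ^ ((1:ℝ)/2) ≤ s := by
    refine sqrt_of_sq ?_
    calc A 0 1 * A 1 0 = A 0 1 * t * (A 1 0 / t) := (prod_eq ht.ne').symm
      _ ≤ s * s := mul_le_mul' hpt hqt
  refine sup_le (sup_le (sup_le ?_ ?_) hsq) ?_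
  · exact le_trans le_sup_left he
  · exact le_trans le_sup_right he
  · rw [ttr_tmul2]
    refine sup_le (sup_le ?_ ?_) (sup_le ?_ ?_)
    · exact le_trans (le_trans (mul_le_of_le_one_right zero_le hC00) le_sup_left) he
    · exact le_trans (mul_le_mul_right hc _) hpt
    · refine le_trans ?_ hqt
      rw [le_div_iff₀ ht, mul_assoc]
      exact mul_le_of_le_one_right zero_le hd
    · exact le_trans (le_trans (mul_le_of_le_one_right zero_le hC11) le_sup_right) he

lemma ttr_AB_le_prod (A B : TMat 2) (t : ℝ≥0) (ht : 0 < t) :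
    ttr (tmul A B) ≤
      FF (A 0 0 ⊔ A 1 1) (A 0 1) (A 1 0) t * FF (B 0 0 ⊔ B 1 1) (B 0 1) (B 1 0) t := by
  set sA := FF (A 0 0 ⊔ A 1 1) (A 0 1) (A 1 0) t with hsA
  set sB := FF (B 0 0 ⊔ B 1 1) (B 0 1) (B 1 0) t with hsB
  have hA00 : A 0 0 ≤ sA := le_trans le_sup_left (le_sup_of_le_left le_sup_left)
  have hA11 : A 1 1 ≤ sA := le_trans le_sup_right (le_sup_of_le_left le_sup_left)
  have hB00 : B 0 0 ≤ sB := le_trans le_sup_left (le_sup_of_le_left le_sup_left)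
  have hB11 : B 1 1 ≤ sB := le_trans le_sup_right (le_sup_of_le_left le_sup_left)
  rw [ttr_tmul2]
  refine sup_le (sup_le (mul_le_mul' hA00 hB00) ?_) (sup_le ?_ (mul_le_mul' hA11 hB11))
  · calc A 0 1 * B 1 0 = A 0 1 * t * (B 1 0 / t) := (prod_eq ht.ne').symm
      _ ≤ sA * sB := mul_le_mul' (le_sup_of_le_left le_sup_right) le_sup_right
  · calc A 1 0 * B 0 1 = B 0 1 * A 1 0 := mul_comm _ _
      _ = B 0 1 * t * (A 1 0 / t) := (prod_eq ht.ne').symm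
      _ = A 1 0 / t * (B 0 1 * t) := mul_comm _ _
      _ ≤ sA * sB := mul_le_mul' le_sup_right (le_sup_of_le_left le_sup_right)

lemma mul_sup' (a b c : ℝ≥0) : a * (b ⊔ c) = a * b ⊔ a * c := by
  rcases le_total b c with h | h
  · rw [sup_eq_right.2 h, sup_eq_right.2 (mul_le_mul_right h a)]
  · rw [sup_eq_left.2 h, sup_eq_left.2 (mul_le_mul_right h a)]

lemma mul_inv_le {x y z : ℝ≥0} (hy : y ≠ 0) (h : x ≤ z * y) : x * y⁻¹ ≤ z := by
  calc x * y⁻¹ ≤ z * y * y⁻¹ := mul_le_mul_left h _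
    _ = z := by rw [mul_assoc, mul_inv_cancel₀ hy, mul_one]

lemma ex_min (e p q f u v c d a b : ℝ≥0) (ha : 0 < a) (hb : 0 < b)
    (he : e ≤ a) (hf : f ≤ b) (hpq : p*q ≤ a*a) (huv : u*v ≤ b*b)
    (hpc : p*c ≤ a) (hqd : q*d ≤ a) (huc : u*c ≤ b) (hvd : v*d ≤ b)
    (hcd : c*d ≤ 1) (hpv : p*v ≤ a*b) (hqu : q*u ≤ a*b) :
    ∃ t, 0 < t ∧ c ≤ t ∧ d*t ≤ 1 ∧ FF e p q t ≤ a ∧ FF f u v t ≤ b := by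
  set D := d ⊔ p/a ⊔ u/b with hD
  have hDpos : (0:ℝ≥0) < 1 + D := lt_of_lt_of_le zero_lt_one le_self_add
  have hdD : d ≤ 1 + D := le_trans (le_trans le_sup_left le_sup_left) le_add_self
  have hpD : p ≤ a * (1 + D) := by
    have h1 : p ≤ (p/a) * a := by rw [div_mul_cancel₀ _ ha.ne']
    calc p ≤ (p/a) * a := h1
      _ ≤ (1 + D) * a := mul_le_mul_left (le_trans (le_trans le_sup_right le_sup_left) le_add_self) a
      _ = a * (1 + D) := mul_comm _ _
  have huD : u ≤ b * (1 + D) := by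
    have h1 : u ≤ (u/b) * b := by rw [div_mul_cancel₀ _ hb.ne']
    calc u ≤ (u/b) * b := h1
      _ ≤ (1 + D) * b := mul_le_mul_left (le_trans le_sup_right le_add_self) b
      _ = b * (1 + D) := mul_comm _ _
  refine ⟨c ⊔ q/a ⊔ v/b ⊔ (1+D)⁻¹, ?_, ?_, ?_, ?_, ?_⟩
  · exact lt_of_lt_of_le (inv_pos.2 hDpos) le_sup_right
  · exact le_trans (le_trans le_sup_left le_sup_left) le_sup_left
  · simp only [mul_sup']
    refine sup_le (sup_le (sup_le ?_ ?_) ?_) ?_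
    · rw [mul_comm]; exact hcd
    · rw [← mul_div_assoc, div_le_iff₀ ha, one_mul, mul_comm]; exact hqd
    · rw [← mul_div_assoc, div_le_iff₀ hb, one_mul, mul_comm]; exact hvd
    · exact mul_inv_le hDpos.ne' (by rwa [one_mul])
  · refine sup_le (sup_le he ?_) ?_
    · simp only [mul_sup']
      refine sup_le (sup_le (sup_le hpc ?_) ?_) ?_
      · rw [← mul_div_assoc, div_le_iff₀ ha]; exact hpq
      · rw [← mul_div_assoc, div_le_iff₀ hb]; exact hpv
      · exact mul_inv_le hDpos.ne' hpD
    · rw [div_le_iff₀ (lt_of_lt_of_le (inv_pos.2 hDpos) le_sup_right)]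
      calc q = (q/a) * a := by rw [div_mul_cancel₀ _ ha.ne']
        _ ≤ (c ⊔ q/a ⊔ v/b ⊔ (1+D)⁻¹) * a :=
          mul_le_mul_left (le_trans (le_trans le_sup_right le_sup_left) le_sup_left) a
        _ = a * _ := mul_comm _ _
  · refine sup_le (sup_le hf ?_) ?_
    · simp only [mul_sup']
      refine sup_le (sup_le (sup_le huc ?_) ?_) ?_
      · rw [← mul_div_assoc, div_le_iff₀ ha, mul_comm u q, mul_comm b a]; exact hqu
      · rw [← mul_div_assoc, div_le_iff₀ hb]; exact huv
      · exact mul_inv_le hDpos.ne' huD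
    · rw [div_le_iff₀ (lt_of_lt_of_le (inv_pos.2 hDpos) le_sup_right)]
      calc v = (v/b) * b := by rw [div_mul_cancel₀ _ hb.ne']
        _ ≤ (c ⊔ q/a ⊔ v/b ⊔ (1+D)⁻¹) * b :=
          mul_le_mul_left (le_trans le_sup_right le_sup_left) b
        _ = b * _ := mul_comm _ _

lemma ex_seg (e p q f u v c d a b r a' : ℝ≥0)
    (ha : 0 < a) (hb : 0 < b) (hp : 0 < p)
    (he : e ≤ a) (hf : f ≤ b) (hpq : p*q ≤ a*a) (huv : u*v ≤ b*b)
    (hpc : p*c ≤ a) (hvd : v*d ≤ b)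
    (hr : r = p*v) (haa' : a ≤ a') (ha'r : a'*b ≤ r) :
    ∃ t, 0 < t ∧ c ≤ t ∧ d*t ≤ 1 ∧ FF e p q t = a' ∧ FF f u v t = r/a' := by
  have ha' : (0:ℝ≥0) < a' := lt_of_lt_of_le ha haa'
  have hpt : p * (a'/p) = a' := by rw [mul_comm, div_mul_cancel₀ _ hp.ne']
  refine ⟨a'/p, pos_iff_ne_zero.2 (div_ne_zero ha'.ne' hp.ne'), ?_, ?_, ?_, ?_⟩
  · rw [le_div_iff₀ hp, mul_comm]
    exact le_trans hpc haa'
  · rw [← mul_div_assoc, div_le_iff₀ hp, one_mul]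
    have key : d * a' * b ≤ p * b := by
      calc d * a' * b = d * (a' * b) := mul_assoc _ _ _
        _ ≤ d * r := mul_le_mul_right ha'r d
        _ = p * (v * d) := by rw [hr]; ring
        _ ≤ p * b := mul_le_mul_right hvd p
    exact le_of_mul_le_mul_right key hb
  · refine le_antisymm (sup_le (sup_le (le_trans he haa') hpt.le) ?_) ?_
    · rw [div_div_eq_mul_div, div_le_iff₀ ha']
      calc q * p = p * q := mul_comm _ _
        _ ≤ a * a := hpq
        _ ≤ a' * a' := mul_le_mul' haa' haa'
    · exact le_trans hpt.ge (le_sup_of_le_left le_sup_right)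
  · have hvt : v / (a'/p) = r / a' := by
      rw [div_div_eq_mul_div, hr, mul_comm]
    refine le_antisymm (sup_le (sup_le ?_ ?_) hvt.le) ?_
    · rw [le_div_iff₀ ha']
      calc f * a' ≤ b * a' := mul_le_mul_left hf a'
        _ = a' * b := mul_comm _ _
        _ ≤ r := ha'r
    · rw [← mul_div_assoc, le_div_iff₀ ha', div_mul_eq_mul_div, div_le_iff₀ hp]
      have key : u * a' * a' * (b * b) ≤ r * p * (b * b) := by
        calc u * a' * a' * (b * b) = u * (a' * b) * (a' * b) := by ring
          _ ≤ u * r * r := by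
            refine mul_le_mul' (mul_le_mul_right ha'r u) ha'r
          _ = r * p * (u * v) := by rw [hr]; ring
          _ ≤ r * p * (b * b) := mul_le_mul_right huv _
      exact le_of_mul_le_mul_right key (mul_pos hb hb)
    · exact le_trans hvt.ge le_sup_right

lemma FF_inv (e p q s : ℝ≥0) : FF e p q s⁻¹ = FF e q p s := by
  rw [FF, FF, div_eq_mul_inv q, inv_inv, ← div_eq_mul_inv p, sup_right_comm, mul_comm q s,
    mul_comm s q]

end Stmt19Aux

open Stmt19Aux in
/-- Two-dimensional constrained bi-criteria problem: if
tr(A⊗B) ≤ (max(λ, tr(A⊗C))) (max(μ, tr(B⊗C))), the Pareto-minimal set of V is the single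
point (max(λ, tr(A⊗C)), max(μ, tr(B⊗C))); otherwise it is the segment
{(α, tr(A⊗B)/α) : max(λ, tr(A⊗C)) ≤ α ≤ tr(A⊗B)/max(μ, tr(B⊗C))}. -/
theorem stmt19 (A B C : TMat 2)
    (hlam : 0 < lam2 A) (hmu : 0 < lam2 B)
    (hC : C 0 0 ⊔ C 1 1 ⊔ C 0 1 * C 1 0 ≤ 1) :
    (ttr (tmul A B) ≤ (lam2 A ⊔ ttr (tmul A C)) * (lam2 B ⊔ ttr (tmul B C)) →
      {p | ParetoMin (V2 A B C) p} =
        {(lam2 A ⊔ ttr (tmul A C), lam2 B ⊔ ttr (tmul B C))}) ∧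
    ((lam2 A ⊔ ttr (tmul A C)) * (lam2 B ⊔ ttr (tmul B C)) < ttr (tmul A B) →
      {p | ParetoMin (V2 A B C) p} =
        {p | ∃ α : ℝ≥0, lam2 A ⊔ ttr (tmul A C) ≤ α ∧
          α ≤ ttr (tmul A B) / (lam2 B ⊔ ttr (tmul B C)) ∧
          p = (α, ttr (tmul A B) / α)}) := by
  have hC00 : C 0 0 ≤ 1 := le_trans (le_trans le_sup_left le_sup_left) hC
  have hC11 : C 1 1 ≤ 1 := le_trans (le_trans le_sup_right le_sup_left) hC
  have hCd : C 0 1 * C 1 0 ≤ 1 := le_trans le_sup_right hC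
  set α := lam2 A ⊔ ttr (tmul A C) with hαdef
  set β := lam2 B ⊔ ttr (tmul B C) with hβdef
  set r := ttr (tmul A B) with hrdef
  have hα : 0 < α := lt_of_lt_of_le hlam le_sup_left
  have hβ : 0 < β := lt_of_lt_of_le hmu le_sup_left
  have heA : A 0 0 ⊔ A 1 1 ≤ α := le_trans le_sup_left le_sup_left
  have heB : B 0 0 ⊔ B 1 1 ≤ β := le_trans le_sup_left le_sup_left
  have hpqA : A 0 1 * A 1 0 ≤ α * α := sq_of_sqrt (le_trans le_sup_right le_sup_left)
  have hpqB : B 0 1 * B 1 0 ≤ β * β := sq_of_sqrt (le_trans le_sup_right le_sup_left)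
  have hpcA : A 0 1 * C 1 0 ≤ α := by
    rw [hαdef, ttr_tmul2]; exact le_sup_of_le_right (le_sup_of_le_left le_sup_right)
  have hqdA : A 1 0 * C 0 1 ≤ α := by
    rw [hαdef, ttr_tmul2]; exact le_sup_of_le_right (le_sup_of_le_right le_sup_left)
  have hpcB : B 0 1 * C 1 0 ≤ β := by
    rw [hβdef, ttr_tmul2]; exact le_sup_of_le_right (le_sup_of_le_left le_sup_right)
  have hqdB : B 1 0 * C 0 1 ≤ β := by
    rw [hβdef, ttr_tmul2]; exact le_sup_of_le_right (le_sup_of_le_right le_sup_left)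
  have hA00 : A 0 0 ≤ α := le_trans (le_sup_of_le_left le_sup_left) le_sup_left
  have hA11 : A 1 1 ≤ α := le_trans (le_sup_of_le_left le_sup_right) le_sup_left
  have hB00 : B 0 0 ≤ β := le_trans (le_sup_of_le_left le_sup_left) le_sup_left
  have hB11 : B 1 1 ≤ β := le_trans (le_sup_of_le_left le_sup_right) le_sup_left
  have hmem : ∀ t : ℝ≥0, 0 < t → C 1 0 ≤ t → C 0 1 * t ≤ 1 →
      (FF (A 0 0 ⊔ A 1 1) (A 0 1) (A 1 0) t, FF (B 0 0 ⊔ B 1 1) (B 0 1) (B 1 0) t)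
        ∈ V2 A B C :=
    fun t ht hc hd => (mem_V2_iff A B C hC _).2 ⟨t, ht, hc, hd, rfl⟩
  have hbound : ∀ p ∈ V2 A B C, α ≤ p.1 ∧ β ≤ p.2 ∧ r ≤ p.1 * p.2 := by
    intro p hp
    obtain ⟨t, ht, hc, hd, rfl⟩ := (mem_V2_iff A B C hC p).1 hp
    exact ⟨lam_ttr_le_FF A C hC00 hC11 t ht hc hd,
      lam_ttr_le_FF B C hC00 hC11 t ht hc hd, ttr_AB_le_prod A B t ht⟩
  have hP2a : r ≤ α * β → (α, β) ∈ V2 A B C := by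
    intro hle
    have h1 : A 0 1 * B 1 0 ≤ α * β :=
      le_trans (by rw [hrdef, ttr_tmul2]; exact le_sup_of_le_left le_sup_right) hle
    have h2 : A 1 0 * B 0 1 ≤ α * β :=
      le_trans (by rw [hrdef, ttr_tmul2]; exact le_sup_of_le_right le_sup_left) hle
    obtain ⟨t, ht, hc, hd, hFA, hFB⟩ :=
      ex_min (A 0 0 ⊔ A 1 1) (A 0 1) (A 1 0) (B 0 0 ⊔ B 1 1) (B 0 1) (B 1 0)
        (C 1 0) (C 0 1) α β hα hβ heA heB hpqA hpqB hpcA hqdA hpcB hqdB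
        (by rw [mul_comm]; exact hCd) h1 h2
    have hFA' : FF (A 0 0 ⊔ A 1 1) (A 0 1) (A 1 0) t = α :=
      le_antisymm hFA (by rw [hαdef]; exact lam_ttr_le_FF A C hC00 hC11 t ht hc hd)
    have hFB' : FF (B 0 0 ⊔ B 1 1) (B 0 1) (B 1 0) t = β :=
      le_antisymm hFB (by rw [hβdef]; exact lam_ttr_le_FF B C hC00 hC11 t ht hc hd)
    have := hmem t ht hc hd
    rwa [hFA', hFB'] at this
  have hP2b : ∀ a' : ℝ≥0, α * β < r → α ≤ a' → a' * β ≤ r → (a', r / a') ∈ V2 A B C := by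
    intro a' hlt haa' ha'r
    have hr0 : 0 < r := lt_of_le_of_lt zero_le hlt
    have hrm : r ≤ α * β ⊔ (A 0 1 * B 1 0 ⊔ A 1 0 * B 0 1) := by
      rw [hrdef, ttr_tmul2]
      refine sup_le (sup_le ?_ ?_) (sup_le ?_ ?_)
      · exact le_sup_of_le_left (mul_le_mul' hA00 hB00)
      · exact le_sup_of_le_right le_sup_left
      · exact le_sup_of_le_right le_sup_right
      · exact le_sup_of_le_left (mul_le_mul' hA11 hB11)
    have hrm2 : r ≤ A 0 1 * B 1 0 ⊔ A 1 0 * B 0 1 := by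
      rcases le_sup_iff.1 hrm with h | h
      · exact absurd h (not_le.2 hlt)
      · exact h
    rcases le_sup_iff.1 hrm2 with h | h
    · have hreq : r = A 0 1 * B 1 0 :=
        le_antisymm h (by rw [hrdef, ttr_tmul2]; exact le_sup_of_le_left le_sup_right)
      have hne : A 0 1 * B 1 0 ≠ 0 := by rw [← hreq]; exact hr0.ne'
      have hp : 0 < A 0 1 := pos_iff_ne_zero.2 (left_ne_zero_of_mul hne)
      obtain ⟨t, ht, hc, hd, hFA, hFB⟩ :=
        ex_seg (A 0 0 ⊔ A 1 1) (A 0 1) (A 1 0) (B 0 0 ⊔ B 1 1) (B 0 1) (B 1 0)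
          (C 1 0) (C 0 1) α β r a' hα hβ hp heA heB hpqA hpqB hpcA hqdB hreq haa' ha'r
      have := hmem t ht hc hd
      rwa [hFA, hFB] at this
    · have hreq : r = A 1 0 * B 0 1 :=
        le_antisymm h (by rw [hrdef, ttr_tmul2]; exact le_sup_of_le_right le_sup_left)
      have hne : A 1 0 * B 0 1 ≠ 0 := by rw [← hreq]; exact hr0.ne'
      have hp : 0 < A 1 0 := pos_iff_ne_zero.2 (left_ne_zero_of_mul hne)
      obtain ⟨s, hs, hc, hd, hFA, hFB⟩ :=
        ex_seg (A 0 0 ⊔ A 1 1) (A 1 0) (A 0 1) (B 0 0 ⊔ B 1 1) (B 1 0) (B 0 1)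
          (C 0 1) (C 1 0) α β r a' hα hβ hp heA heB (by rw [mul_comm]; exact hpqA)
          (by rw [mul_comm]; exact hpqB) hqdA hpcB hreq haa' ha'r
      have ht : 0 < s⁻¹ := inv_pos.2 hs
      have hc' : C 1 0 ≤ s⁻¹ := by rw [← one_div, le_div_iff₀ hs]; exact hd
      have hd' : C 0 1 * s⁻¹ ≤ 1 := mul_inv_le hs.ne' (by rw [one_mul]; exact hc)
      have := hmem s⁻¹ ht hc' hd'
      rwa [FF_inv, FF_inv, hFA, hFB] at this
  constructor
  · intro hle
    have hmemp : (α, β) ∈ V2 A B C := hP2a hle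
    ext p
    simp only [Set.mem_setOf_eq, Set.mem_singleton_iff, ParetoMin]
    constructor
    · rintro ⟨hpV, hno⟩
      by_contra hnep
      exact hno ⟨(α, β), hmemp, (hbound p hpV).1, (hbound p hpV).2.1,
        fun hh => hnep hh.symm⟩
    · rintro rfl
      refine ⟨hmemp, ?_⟩
      rintro ⟨q, hqV, h1, h2, hne⟩
      exact hne (Prod.ext (le_antisymm h1 (hbound q hqV).1)
        (le_antisymm h2 (hbound q hqV).2.1))
  · intro hlt
    have hr0 : 0 < r := lt_of_le_of_lt zero_le hlt
    ext p
    simp only [Set.mem_setOf_eq, ParetoMin]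
    constructor
    · rintro ⟨hpV, hno⟩
      obtain ⟨h1, h2, h3⟩ := hbound p hpV
      have hp1 : 0 < p.1 := lt_of_lt_of_le hα h1
      by_cases hcase : p.1 * β ≤ r
      · have hmem1 : (p.1, r / p.1) ∈ V2 A B C := hP2b p.1 hlt h1 hcase
        have hle2 : r / p.1 ≤ p.2 :=
          (div_le_iff₀ hp1).2 (by rw [mul_comm]; exact h3)
        have heqp : (p.1, r / p.1) = p := by
          by_contra hnep
          exact hno ⟨(p.1, r / p.1), hmem1, le_rfl, hle2, hnep⟩
        exact ⟨p.1, h1, (le_div_iff₀ hβ).2 hcase, heqp.symm⟩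
      · push_neg at hcase
        have hmem2 : (r / β, r / (r / β)) ∈ V2 A B C :=
          hP2b (r / β) hlt ((le_div_iff₀ hβ).2 hlt.le)
            (le_of_eq (div_mul_cancel₀ r hβ.ne'))
        have hq2 : r / (r / β) = β := by
          rw [div_div_eq_mul_div, mul_comm r β, mul_div_assoc, div_self hr0.ne', mul_one]
        rw [hq2] at hmem2
        have hlt1 : r / β < p.1 := (div_lt_iff₀ hβ).2 hcase
        exact (hno ⟨(r / β, β), hmem2, hlt1.le, h2,
          fun hh => hlt1.ne (congrArg Prod.fst hh)⟩).elim
    · rintro ⟨a', haa', ha'le, rfl⟩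
      have ha'r : a' * β ≤ r := (le_div_iff₀ hβ).1 ha'le
      have ha' : 0 < a' := lt_of_lt_of_le hα haa'
      have hra' : 0 < r / a' := pos_iff_ne_zero.2 (div_ne_zero hr0.ne' ha'.ne')
      refine ⟨hP2b a' hlt haa' ha'r, ?_⟩
      rintro ⟨q, hqV, h1, h2, hne⟩
      obtain ⟨hb1, hb2, hb3⟩ := hbound q hqV
      have hq12 : q.1 * q.2 = r := by
        refine le_antisymm ?_ hb3
        calc q.1 * q.2 ≤ a' * (r / a') := mul_le_mul' h1 h2
          _ = r := by rw [mul_comm, div_mul_cancel₀ _ ha'.ne']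
      have hq2 : q.2 = r / a' := by
        refine le_antisymm h2 ?_
        refine (div_le_iff₀ ha').2 ?_
        rw [mul_comm]
        exact le_trans hb3 (mul_le_mul_left h1 q.2)
      have hq1 : q.1 = a' := by
        rw [hq2] at hq12
        have h5 : q.1 * (r / a') = a' * (r / a') := by
          rw [hq12, mul_comm, div_mul_cancel₀ _ ha'.ne']
        exact mul_right_cancel₀ hra'.ne' h5
      exact hne (Prod.ext hq1 hq2)
end
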